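/- arXiv:1912.09911 — 2 statements merged into one kernel-verified Lean document; each statement's English description precedes it below -/
import Mathlib

section
/- Let y ∈ W and s ∈ S with ℓ(ys) > ℓ(y), and let H be the unique hyperplane separating the adjacent alcoves y·𝐚_f and ys·𝐚_f. If a combinatorial gallery γ in V is positively folded with respect to φ_{𝐲𝐬} (the orientation induced by the alcove ys·𝐚_f), and L is the maximal H-ingrowth of γ, then the gallery f_H^L(γ) is positively folded with respect to φ_𝐲. -/
open scoped RealInnerProductSpace
open scoped Classical

noncomputable section

/-- The ambient Euclidean space `V = ℝⁿ`. -/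
abbrev V (n : ℕ) : Type := EuclideanSpace ℝ (Fin n)

/-- The data of an irreducible crystallographic (reduced) root system in `ℝⁿ`,
together with a choice of positive roots, simple roots and highest root. -/
structure RootData (n : ℕ) where
  Φ : Set (V n)
  pos : Set (V n)
  simple : Fin n → V n
  highest : V n
  finite : Φ.Finite
  nonzero : ∀ α ∈ Φ, α ≠ 0
  neg_mem : ∀ α ∈ Φ, -α ∈ Φ
  span_top : Submodule.span ℝ Φ = ⊤
  reflect_mem : ∀ α ∈ Φ, ∀ β ∈ Φ, β - (2 * ⟪α, β⟫ / ⟪α, α⟫) • α ∈ Φ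
  crystallographic : ∀ α ∈ Φ, ∀ β ∈ Φ, ∃ m : ℤ, 2 * ⟪α, β⟫ / ⟪α, α⟫ = (m : ℝ)
  reduced : ∀ α ∈ Φ, ∀ c : ℝ, c • α ∈ Φ → c = 1 ∨ c = -1
  pos_sub : pos ⊆ Φ
  pos_total : ∀ α ∈ Φ, α ∈ pos ∨ -α ∈ pos
  pos_not_neg : ∀ α ∈ pos, -α ∉ pos
  simple_mem : ∀ i, simple i ∈ pos
  simple_indep : LinearIndependent ℝ simple
  pos_combo : ∀ α ∈ pos, ∃ c : Fin n → ℝ, (∀ i, 0 ≤ c i) ∧ α = ∑ i, c i • simple i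
  highest_mem : highest ∈ pos
  highest_dominates : ∀ α ∈ pos, ∃ c : Fin n → ℝ, (∀ i, 0 ≤ c i) ∧
    highest - α = ∑ i, c i • simple i
  irreducible : ∀ A B : Set (Fin n), A ∪ B = Set.univ → A ∩ B = ∅ →
    (∀ i ∈ A, ∀ j ∈ B, ⟪simple i, simple j⟫ = 0) → A = ∅ ∨ B = ∅

variable {n : ℕ}

/-- The coroot `α^∨ = 2α/⟨α,α⟩`. -/
def coroot (α : V n) : V n := (2 / ⟪α, α⟫) • α

/-- The affine hyperplane `H_{α,k} = {v : ⟨α,v⟩ = k}`. -/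
def Hy (α : V n) (k : ℝ) : Set (V n) := {v | ⟪α, v⟫ = k}

/-- The closed half-space `{v : ⟨α,v⟩ ≥ k}`. -/
def Hge (α : V n) (k : ℝ) : Set (V n) := {v | k ≤ ⟪α, v⟫}

/-- The closed half-space `{v : ⟨α,v⟩ ≤ k}`. -/
def Hle (α : V n) (k : ℝ) : Set (V n) := {v | ⟪α, v⟫ ≤ k}

/-- The affine reflection `s_{α,k}` fixing `H_{α,k}` pointwise. -/
def sRefl (α : V n) (k : ℝ) : V n → V n := fun v => v - (⟪α, v⟫ - k) • coroot α

/-- The coroot lattice `R^∨ = ⊕ᵢ ℤ αᵢ^∨`. -/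
def corootLattice (D : RootData n) : Set (V n) :=
  {μ | ∃ c : Fin n → ℤ, μ = ∑ i, (c i : ℝ) • coroot (D.simple i)}

/-- The affine Weyl group `W`, as the group of permutations of `V` generated by all
affine reflections `s_{α,k}` with `α ∈ Φ`, `k ∈ ℤ`. -/
def AffW (D : RootData n) : Subgroup (Equiv.Perm (V n)) :=
  Subgroup.closure {e : Equiv.Perm (V n) | ∃ α ∈ D.Φ, ∃ k : ℤ, ⇑e = sRefl α (k : ℝ)}

/-- The finite Weyl group `W₀`, generated by the linear reflections `s_{α,0}`. -/
def FinW (D : RootData n) : Subgroup (Equiv.Perm (V n)) :=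
  Subgroup.closure {e : Equiv.Perm (V n) | ∃ α ∈ D.Φ, ⇑e = sRefl α 0}

/-- The Coxeter generating set `S = {s₀, s₁, …, sₙ}` of the affine Weyl group. -/
def SGen (D : RootData n) : Set (AffW D) :=
  {s | ⇑(s : Equiv.Perm (V n)) = sRefl D.highest 1 ∨
       ∃ i : Fin n, ⇑(s : Equiv.Perm (V n)) = sRefl (D.simple i) 0}

/-- The Coxeter length of `y ∈ W` with respect to `S`. -/
def lenW (D : RootData n) (y : AffW D) : ℕ :=
  sInf {m | ∃ l : List (AffW D), (∀ s ∈ l, s ∈ SGen D) ∧ l.length = m ∧ l.prod = y}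

/-- The fundamental alcove `𝐚_f`. -/
def fund (D : RootData n) : Set (V n) :=
  {v | (∀ i, 0 ≤ ⟪D.simple i, v⟫) ∧ ⟪D.highest, v⟫ ≤ 1}

/-- The union of all the hyperplanes `H_{α,k}`. -/
def wallUnion (D : RootData n) : Set (V n) := ⋃ α ∈ D.Φ, ⋃ k : ℤ, Hy α (k : ℝ)

/-- An alcove: the closure of a connected component of the complement of all walls. -/
def IsAlcove (D : RootData n) (c : Set (V n)) : Prop :=
  ∃ v ∈ (wallUnion D)ᶜ, c = closure (connectedComponentIn (wallUnion D)ᶜ v)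

/-- A (closed) face of the Coxeter complex: the closure of an equivalence class of points
having the same position relative to every hyperplane of the arrangement. -/
def IsFace (D : RootData n) (F : Set (V n)) : Prop :=
  ∃ v : V n, F = closure {w | ∀ α ∈ D.Φ, ∀ k : ℤ,
    (⟪α, w⟫ = (k : ℝ) ↔ ⟪α, v⟫ = (k : ℝ)) ∧ (⟪α, w⟫ < (k : ℝ) ↔ ⟪α, v⟫ < (k : ℝ))}

/-- The set of all hyperplanes of the affine arrangement, as subsets of `V`. -/
def hyperplanes (D : RootData n) : Set (Set (V n)) :=
  {H | ∃ α ∈ D.Φ, ∃ k : ℤ, H = Hy α (k : ℝ)}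

/-- `p` is a panel (codimension-one face) of the alcove `c`: it is the intersection of `c`
with a wall, and it lies in exactly one hyperplane (its supporting hyperplane). -/
def IsPanelOf (D : RootData n) (p c : Set (V n)) : Prop :=
  IsAlcove D c ∧ IsFace D p ∧ (∃ H ∈ hyperplanes D, p = c ∩ H) ∧
    ∃! H, H ∈ hyperplanes D ∧ p ⊆ H

/-- The action of an element of the affine Weyl group on subsets of `V`. -/
def actW {D : RootData n} (x : AffW D) (A : Set (V n)) : Set (V n) :=
  ⇑(x : Equiv.Perm (V n)) '' A

/-- The data of a finite combinatorial gallery `(p₀, c₀, p₁, …, p_l, c_l, p_{l+1})`: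
`len = l`, alcoves `c 0, …, c len` and faces `p 0, …, p (len+1)`. -/
structure PreGallery (n : ℕ) where
  len : ℕ
  p : ℕ → Set (V n)
  c : ℕ → Set (V n)

/-- The gallery conditions for the data of a combinatorial gallery. -/
def IsGallery (D : RootData n) (γ : PreGallery n) : Prop :=
  (∀ i ≤ γ.len, IsAlcove D (γ.c i)) ∧
  (IsFace D (γ.p 0) ∧ γ.p 0 ⊆ γ.c 0) ∧
  (IsFace D (γ.p (γ.len + 1)) ∧ γ.p (γ.len + 1) ⊆ γ.c γ.len) ∧
  ∀ i, 1 ≤ i → i ≤ γ.len → IsPanelOf D (γ.p i) (γ.c (i - 1)) ∧ IsPanelOf D (γ.p i) (γ.c i)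

/-- A gallery is positively folded with respect to an orientation `φ` if whenever it has a
fold at `pᵢ` (i.e. `c_{i-1} = c_i`), `φ(cᵢ, pᵢ) = +`. -/
def PositivelyFolded (φ : Set (V n) → Set (V n) → Prop) (γ : PreGallery n) : Prop :=
  ∀ i, 1 ≤ i → i ≤ γ.len → γ.c (i - 1) = γ.c i → φ (γ.c i) (γ.p i)

/-- `X` and `Y` lie in a common closed half-space bounded by `H_{α,k}`. -/
def sameSide (α : V n) (k : ℝ) (X Y : Set (V n)) : Prop :=
  (X ⊆ Hge α k ∧ Y ⊆ Hge α k) ∨ (X ⊆ Hle α k ∧ Y ⊆ Hle α k)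

/-- The hyperplane `H_{α,k}` separates `X` from `Y` (they lie in opposite closed
half-spaces). -/
def Separates (α : V n) (k : ℝ) (X Y : Set (V n)) : Prop :=
  (X ⊆ Hge α k ∧ Y ⊆ Hle α k) ∨ (X ⊆ Hle α k ∧ Y ⊆ Hge α k)

/-- The orientation induced by an alcove `A`: `φ(c,p) = +` iff the closed half-space bounded
by the supporting hyperplane of `p` which contains `c` does not contain `A`. -/
def alcoveOrient (D : RootData n) (A : Set (V n)) : Set (V n) → Set (V n) → Prop :=
  fun c p => ∀ α ∈ D.Φ, ∀ k : ℤ, p ⊆ Hy α (k : ℝ) → ¬ sameSide α (k : ℝ) c A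

/-- Two faces have the same type iff they lie in the same orbit of the affine Weyl group. -/
def SameTypeFace (D : RootData n) (σ σ' : Set (V n)) : Prop :=
  ∃ x : Equiv.Perm (V n), x ∈ AffW D ∧ σ' = ⇑x '' σ

/-- Two galleries have the same type iff they have the same length and corresponding
faces (first face, panels, last face) have the same types. -/
def SameTypeGallery (D : RootData n) (γ γ' : PreGallery n) : Prop :=
  γ.len = γ'.len ∧ ∀ i ≤ γ.len + 1, SameTypeFace D (γ.p i) (γ'.p i)

/-- A gallery is minimal if it has minimal length among all galleries with the same first
and last faces. -/
def IsMinimal (D : RootData n) (γ : PreGallery n) : Prop :=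
  IsGallery D γ ∧ ∀ γ' : PreGallery n, IsGallery D γ' → γ'.p 0 = γ.p 0 →
    γ'.p (γ'.len + 1) = γ.p (γ.len + 1) → γ.len ≤ γ'.len

/-- The shadow with respect to the orientation `φ`, relative to a fixed (minimal) gallery
`γ`: the set of final simplices of all galleries of the same type as `γ`, with the same
first face, which are positively folded with respect to `φ`. -/
def Shadow (D : RootData n) (φ : Set (V n) → Set (V n) → Prop) (γ : PreGallery n) :
    Set (Set (V n)) :=
  {ζ | ∃ γ' : PreGallery n, IsGallery D γ' ∧ SameTypeGallery D γ γ' ∧ γ'.p 0 = γ.p 0 ∧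
    PositivelyFolded φ γ' ∧ ζ = γ'.p (γ'.len + 1)}

/-- The vertex version of the shadow: the set of points `μ` whose corresponding vertex
(the singleton face `{μ}`) is a final simplex of a positively folded gallery of the
appropriate type. -/
def VShadow (D : RootData n) (φ : Set (V n) → Set (V n) → Prop) (γ : PreGallery n) :
    Set (V n) :=
  {μ | ({μ} : Set (V n)) ∈ Shadow D φ γ}

/-- The orbit `W₀ · λ` of a point under the finite Weyl group. -/
def W0orbit (D : RootData n) (lam : V n) : Set (V n) :=
  {v | ∃ w ∈ FinW D, v = w lam}

/-- The closed half-space bounded by `H_{α,k}` which contains the fundamental alcove. -/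
def HalfId (D : RootData n) (α : V n) (k : ℝ) : Set (V n) :=
  if fund D ⊆ Hge α k then Hge α k else Hle α k

/-- `[j,m]` is a (finite) `H_{α,k}`-protrusion of `γ`. -/
def IsProtrusionFin (D : RootData n) (γ : PreGallery n) (α : V n) (k : ℝ) (j m : ℕ) : Prop :=
  j < m ∧ m ≤ γ.len + 1 ∧ γ.p j ⊆ Hy α k ∧ γ.p m ⊆ Hy α k ∧
    ∀ i, j ≤ i → i < m → ¬ γ.c i ⊆ HalfId D α k

/-- `[j,∞)` is an (infinite) `H_{α,k}`-protrusion of `γ`. -/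
def IsProtrusionInf (D : RootData n) (γ : PreGallery n) (α : V n) (k : ℝ) (j : ℕ) : Prop :=
  j ≤ γ.len + 1 ∧ γ.p j ⊆ Hy α k ∧ ∀ i, j ≤ i → i ≤ γ.len → ¬ γ.c i ⊆ HalfId D α k

/-- The set of indices reflected by the maximal `H`-outcrop: the union of (the index sets
of) all `H`-protrusions. -/
def maxOutcrop (D : RootData n) (γ : PreGallery n) (α : V n) (k : ℝ) : Set ℕ :=
  {i | (∃ j m, IsProtrusionFin D γ α k j m ∧ j ≤ i ∧ i < m) ∨
       (∃ j, IsProtrusionInf D γ α k j ∧ j ≤ i)}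

/-- `[j,m]` is a (finite) `H_{α,k}`-indentation of `γ`. -/
def IsIndentationFin (D : RootData n) (γ : PreGallery n) (α : V n) (k : ℝ) (j m : ℕ) : Prop :=
  1 ≤ j ∧ j < m ∧ m ≤ γ.len + 1 ∧ γ.p j ⊆ Hy α k ∧ γ.p m ⊆ Hy α k ∧
    ∀ i, j ≤ i → i < m → γ.c i ⊆ HalfId D α k

/-- `[j,∞)` is an (infinite) `H_{α,k}`-indentation of `γ`. -/
def IsIndentationInf (D : RootData n) (γ : PreGallery n) (α : V n) (k : ℝ) (j : ℕ) : Prop :=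
  1 ≤ j ∧ j ≤ γ.len + 1 ∧ γ.p j ⊆ Hy α k ∧ ∀ i, j ≤ i → i ≤ γ.len → γ.c i ⊆ HalfId D α k

/-- The set of indices reflected by the maximal `H`-ingrowth: the union of (the index sets
of) all `H`-indentations. -/
def maxIngrowth (D : RootData n) (γ : PreGallery n) (α : V n) (k : ℝ) : Set ℕ :=
  {i | (∃ j m, IsIndentationFin D γ α k j m ∧ j ≤ i ∧ i < m) ∨
       (∃ j, IsIndentationInf D γ α k j ∧ j ≤ i)}

/-- The operators `e_H^L` and `f_H^L`: reflect in `H_{α,k}` those alcoves (and the faces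
in between) whose indices belong to `L`.  (Since the bounding faces of a protrusion or
indentation lie in `H`, they are fixed pointwise by the reflection, so this uniform
description agrees with the usual one.) -/
def flipGallery (α : V n) (k : ℝ) (L : Set ℕ) (γ : PreGallery n) : PreGallery n :=
  ⟨γ.len,
   fun i => if i ∈ L then sRefl α k '' γ.p i else γ.p i,
   fun i => if i ∈ L then sRefl α k '' γ.c i else γ.c i⟩

/-- `P` is the index set of a single `H`-protrusion. -/
def IsFlipProtrusion (D : RootData n) (γ : PreGallery n) (α : V n) (k : ℝ) (P : Set ℕ) :
    Prop :=
  (∃ j m, IsProtrusionFin D γ α k j m ∧ P = Set.Ico j m) ∨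
  (∃ j, IsProtrusionInf D γ α k j ∧ P = Set.Ici j)

/-- `P` is the index set of a single `H`-indentation. -/
def IsFlipIndentation (D : RootData n) (γ : PreGallery n) (α : V n) (k : ℝ) (P : Set ℕ) :
    Prop :=
  (∃ j m, IsIndentationFin D γ α k j m ∧ P = Set.Ico j m) ∨
  (∃ j, IsIndentationInf D γ α k j ∧ P = Set.Ici j)

/-- `L` is an `H`-outcrop: a disjoint union of `H`-protrusions. -/
def IsOutcrop (D : RootData n) (γ : PreGallery n) (α : V n) (k : ℝ) (L : Set ℕ) : Prop :=
  ∃ C : Set (Set ℕ), (∀ P ∈ C, IsFlipProtrusion D γ α k P) ∧ C.Pairwise Disjoint ∧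
    L = ⋃₀ C

/-- `L` is an `H`-ingrowth: a disjoint union of `H`-indentations. -/
def IsIngrowth (D : RootData n) (γ : PreGallery n) (α : V n) (k : ℝ) (L : Set ℕ) : Prop :=
  ∃ C : Set (Set ℕ), (∀ P ∈ C, IsFlipIndentation D γ α k P) ∧ C.Pairwise Disjoint ∧
    L = ⋃₀ C

/-- The dominant Weyl chamber `C_f`. -/
def Cf (D : RootData n) : Set (V n) := {v | ∀ α ∈ D.pos, 0 ≤ ⟪α, v⟫}

/-- The closed half-space `α^{k,w}` bounded by `H_{α,k}` which contains a subsector of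
the Weyl chamber `w·C_f`. -/
def halfFor (D : RootData n) (α : V n) (k : ℝ) (w : Equiv.Perm (V n)) : Set (V n) :=
  if ∀ v ∈ Cf D, 0 ≤ ⟪α, w v⟫ then Hge α k else Hle α k

/-- The sub-root system `Φ_J` spanned by the simple roots indexed by `J`. -/
def PhiJ (D : RootData n) (J : Set (Fin n)) : Set (V n) :=
  {α | α ∈ D.Φ ∧ α ∈ Submodule.span ℝ (D.simple '' J)}

/-- The positive roots `Φ_J⁺` of the sub-root system `Φ_J`. -/
def PhiJpos (D : RootData n) (J : Set (Fin n)) : Set (V n) := D.pos ∩ PhiJ D J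

/-- `w0` is the longest element of the finite Weyl group: it maps the dominant Weyl chamber
to the antidominant one. -/
def IsLongest (D : RootData n) (w0 : Equiv.Perm (V n)) : Prop :=
  w0 ∈ FinW D ∧ ⇑w0 '' Cf D = {v | -v ∈ Cf D}

/-- The `J`-chimney `ξ_J`, a collection of closed half-spaces. -/
def chimney (D : RootData n) (J : Set (Fin n)) (w0 : Equiv.Perm (V n)) : Set (Set (V n)) :=
  {h | ∃ α ∈ PhiJpos D J, ∃ k : ℤ, k ≤ 0 ∧ h = halfFor D α (k : ℝ) 1} ∪
  {h | ∃ α ∈ PhiJpos D J, ∃ k : ℤ, 1 ≤ k ∧ h = halfFor D α (k : ℝ) w0} ∪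
  {h | ∃ β ∈ D.pos \ PhiJpos D J, ∃ k : ℤ, h = halfFor D β (k : ℝ) w0}

/-- The `(J,y)`-chimney `ξ_{J,y} = y · ξ_J`. -/
def chimneyY (D : RootData n) (J : Set (Fin n)) (w0 : Equiv.Perm (V n)) (y : AffW D) :
    Set (Set (V n)) :=
  {h | ∃ h' ∈ chimney D J w0, h = actW y h'}

/-- The orientation `φ_{J,y}` induced by the `(J,y)`-chimney: `φ(c,p) = +` iff the closed
half-space bounded by the supporting hyperplane of `p` which contains `c` is not an
element of `ξ_{J,y}`. -/
def chimneyOrient (D : RootData n) (J : Set (Fin n)) (w0 : Equiv.Perm (V n)) (y : AffW D) :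
    Set (V n) → Set (V n) → Prop :=
  fun c p => ∀ α ∈ D.Φ, ∀ k : ℤ, p ⊆ Hy α (k : ℝ) →
    ¬ ((c ⊆ Hge α (k : ℝ) ∧ Hge α (k : ℝ) ∈ chimneyY D J w0 y) ∨
       (c ⊆ Hle α (k : ℝ) ∧ Hle α (k : ℝ) ∈ chimneyY D J w0 y))

/-- The `J`-sector determined by integers `n_β`, `β ∈ Φ⁺ ∖ Φ_J⁺`. -/
def sectorJ (D : RootData n) (J : Set (Fin n)) (w0 : Equiv.Perm (V n)) (nb : V n → ℤ) :
    Set (V n) :=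
  (⋂ α ∈ PhiJpos D J, halfFor D α 0 1 ∩ halfFor D α 1 w0) ∩
  ⋂ β ∈ D.pos \ PhiJpos D J, halfFor D β (nb β : ℝ) w0

/-- The `(J,y)`-sector `y · S_J({n_β})`. -/
def sectorJY (D : RootData n) (J : Set (Fin n)) (w0 : Equiv.Perm (V n)) (y : AffW D)
    (nb : V n → ℤ) : Set (V n) :=
  actW y (sectorJ D J w0 nb)

/-- The data of an infinite combinatorial gallery `(p₀, c₀, p₁, c₁, …)`. -/
structure InfPreGallery (n : ℕ) where
  p : ℕ → Set (V n)
  c : ℕ → Set (V n)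

/-- The gallery conditions for an infinite combinatorial gallery. -/
def IsInfGallery (D : RootData n) (Γ : InfPreGallery n) : Prop :=
  (∀ i, IsAlcove D (Γ.c i)) ∧ IsFace D (Γ.p 0) ∧ Γ.p 0 ⊆ Γ.c 0 ∧
    ∀ i, 1 ≤ i → IsPanelOf D (Γ.p i) (Γ.c (i - 1)) ∧ IsPanelOf D (Γ.p i) (Γ.c i)

/-- The initial finite subgallery `(p₀, c₀, …, p_{m+1})` of an infinite gallery. -/
def truncGallery (Γ : InfPreGallery n) (m : ℕ) : PreGallery n := ⟨m, Γ.p, Γ.c⟩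

/-- An infinite gallery is minimal if every initial finite subgallery is minimal. -/
def InfMinimal (D : RootData n) (Γ : InfPreGallery n) : Prop :=
  ∀ m : ℕ, IsMinimal D (truncGallery Γ m)

/-- Regularity of a (minimal infinite) gallery with respect to the `(J,y)`-sector, where
`y = t^μ u`. -/
def RegularWrt (D : RootData n) (J : Set (Fin n)) (w0 u : Equiv.Perm (V n)) (μ : V n)
    (nb : V n → ℤ) (Γ : InfPreGallery n) : Prop :=
  ∀ β ∈ D.pos \ PhiJpos D J, ∀ k : ℤ,
    halfFor D (u β) (k : ℝ) (u * w0) ⊆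
      halfFor D (u β) ((nb β : ℝ) + ⟪u β, μ⟫) (u * w0) →
    ∃ i, Γ.c i ⊆ halfFor D (u β) (k : ℝ) (u * w0)

/-- The panel of the fundamental alcove fixed by the generator `s ∈ S` (determining the
type of a panel). -/
def fixedPanelType {D : RootData n} (s : AffW D) : Set (V n) :=
  fund D ∩ {v | (s : Equiv.Perm (V n)) v = v}

/-- `γ` has type `(type(σ0), s_{j₁}, …, s_{j_l}, type(τ))` where the `s_{jᵢ}` are the
entries of the word `l`. -/
def HasWordType (D : RootData n) (γ : PreGallery n) (σ0 : Set (V n)) (l : List (AffW D))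
    (τ : Set (V n)) : Prop :=
  γ.len = l.length ∧ SameTypeFace D σ0 (γ.p 0) ∧ SameTypeFace D τ (γ.p (γ.len + 1)) ∧
    ∀ i, ∀ h : i < l.length, SameTypeFace D (fixedPanelType (l.get ⟨i, h⟩)) (γ.p (i + 1))

/-- `l` is a reduced word for `w ∈ W`. -/
def IsReducedWord (D : RootData n) (l : List (AffW D)) (w : AffW D) : Prop :=
  (∀ s ∈ l, s ∈ SGen D) ∧ l.prod = w ∧ l.length = lenW D w

end
noncomputable section
open scoped RealInnerProductSpace

namespace Aux
variable {n : ℕ}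

lemma inner_self_ne {α : V n} (h : α ≠ 0) : ⟪α, α⟫ ≠ 0 := by
  intro h0
  exact h (by rwa [inner_self_eq_zero] at h0)

lemma sRefl_def (α : V n) (k : ℝ) (v : V n) :
    sRefl α k v = v - (⟪α, v⟫ - k) • coroot α := rfl

lemma inner_coroot (β α : V n) : ⟪β, coroot α⟫ = 2 * ⟪α, β⟫ / ⟪α, α⟫ := by
  rw [coroot, real_inner_smul_right, real_inner_comm β α]
  ring

lemma inner_sRefl (β α : V n) (k : ℝ) (v : V n) :
    ⟪β, sRefl α k v⟫ = ⟪β, v⟫ - (⟪α, v⟫ - k) * (2 * ⟪α, β⟫ / ⟪α, α⟫) := by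
  rw [sRefl_def, inner_sub_right, real_inner_smul_right, inner_coroot]

lemma inner_sRefl_self {α : V n} (hα : α ≠ 0) (k : ℝ) (v : V n) :
    ⟪α, sRefl α k v⟫ = 2 * k - ⟪α, v⟫ := by
  rw [inner_sRefl]
  set a := ⟪α, v⟫ with ha
  set A := ⟪α, α⟫ with hA
  have hA0 : A ≠ 0 := inner_self_ne hα
  field_simp
  ring

lemma sRefl_fix {α : V n} {k : ℝ} {v : V n} (h : ⟪α, v⟫ = k) : sRefl α k v = v := by
  simp [sRefl_def, h]

lemma sRefl_invol {α : V n} (hα : α ≠ 0) (k : ℝ) (v : V n) :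
    sRefl α k (sRefl α k v) = v := by
  rw [sRefl_def (v := sRefl α k v), inner_sRefl_self hα, sRefl_def]
  rw [show (2 * k - ⟪α, v⟫ - k) = -(⟪α, v⟫ - k) by ring, neg_smul]
  abel

lemma sRefl_neg (α : V n) (k : ℝ) : sRefl (-α) (-k) = sRefl α k := by
  funext v
  have hc : coroot (-α : V n) = -coroot α := by
    simp only [coroot, inner_neg_neg, smul_neg]
  simp only [sRefl_def, hc, inner_neg_left]
  rw [show (-⟪α, v⟫ - -k) = -(⟪α, v⟫ - k) by ring, neg_smul_neg]

lemma norm_reflect {α : V n} (hα : α ≠ 0) (u : V n) :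
    ‖u - ⟪α, u⟫ • coroot α‖ = ‖u‖ := by
  have hA0 : ⟪α, α⟫ ≠ 0 := inner_self_ne hα
  have h2 : ‖u - ⟪α, u⟫ • coroot α‖ ^ 2 = ‖u‖ ^ 2 := by
    rw [norm_sub_sq_real]
    rw [real_inner_smul_right, inner_coroot]
    rw [norm_smul, mul_pow]
    have hcor : ‖coroot α‖ ^ 2 = 4 / ⟪α, α⟫ := by
      rw [coroot, norm_smul, mul_pow, Real.norm_eq_abs, sq_abs,
        ← real_inner_self_eq_norm_sq]
      set A := ⟪α, α⟫ with hA
      field_simp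
      ring
    rw [hcor, Real.norm_eq_abs, sq_abs]
    set a := ⟪α, u⟫ with ha
    set A := ⟪α, α⟫ with hA
    field_simp
    ring
  have := congrArg Real.sqrt h2
  rwa [Real.sqrt_sq (norm_nonneg _), Real.sqrt_sq (norm_nonneg _)] at this

lemma sRefl_dist {α : V n} (hα : α ≠ 0) (k : ℝ) (v w : V n) :
    dist (sRefl α k v) (sRefl α k w) = dist v w := by
  rw [dist_eq_norm, dist_eq_norm]
  have h1 : sRefl α k v - sRefl α k w = (v - w) - ⟪α, v - w⟫ • coroot α := by
    simp only [sRefl_def]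
    rw [inner_sub_right, sub_smul, sub_smul, sub_smul]
    abel
  rw [h1, norm_reflect hα]

end Aux
namespace Aux
variable {n : ℕ}

/-- The simple roots span `V`. -/
lemma span_simple (D : RootData n) :
    Submodule.span ℝ (Set.range D.simple) = ⊤ := by
  rw [eq_top_iff, ← D.span_top]
  apply Submodule.span_le.2
  intro a ha
  have key : ∀ b ∈ D.pos, b ∈ Submodule.span ℝ (Set.range D.simple) := by
    intro b hb
    obtain ⟨c, _, hc⟩ := D.pos_combo b hb
    rw [hc]
    exact Submodule.sum_mem _ fun i _ =>
      Submodule.smul_mem _ _ (Submodule.subset_span ⟨i, rfl⟩)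
  rcases D.pos_total a ha with h | h
  · exact key a h
  · have := key _ h
    simpa using Submodule.neg_mem _ this

/-- The linear map `v ↦ (⟪αᵢ, v⟫)ᵢ`. -/
def Tmap (D : RootData n) : V n →ₗ[ℝ] (Fin n → ℝ) where
  toFun v := fun i => ⟪D.simple i, v⟫
  map_add' v w := by funext i; simp [inner_add_right]
  map_smul' c v := by
    funext i
    simp only [RingHom.id_apply, Pi.smul_apply, smul_eq_mul]
    exact real_inner_smul_right _ _ _

lemma Tmap_surj (D : RootData n) : Function.Surjective (Tmap D) := by
  have hfin : Module.finrank ℝ (V n) = Module.finrank ℝ (Fin n → ℝ) := by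
    rw [finrank_euclideanSpace_fin, Module.finrank_fin_fun]
  rw [← LinearMap.injective_iff_surjective_of_finrank_eq_finrank hfin]
  intro v w hvw
  have h0 : Tmap D (v - w) = 0 := by rw [map_sub, hvw, sub_self]
  have hall : ∀ i, ⟪D.simple i, v - w⟫ = 0 := fun i => congrFun h0 i
  have hspan : ∀ u ∈ Submodule.span ℝ (Set.range D.simple), ⟪u, v - w⟫ = 0 := by
    intro u hu
    induction hu using Submodule.span_induction with
    | mem x hx => obtain ⟨i, rfl⟩ := hx; exact hall i
    | zero => simp
    | add x y _ _ hx hy => rw [inner_add_left, hx, hy]; ring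
    | smul c x _ hx => rw [real_inner_smul_left, hx]; ring
  have : ⟪v - w, v - w⟫ = 0 := hspan _ (by rw [span_simple D]; trivial)
  have := inner_self_eq_zero.mp this
  exact sub_eq_zero.mp this

/-- Dual vectors to the simple roots. -/
def om (D : RootData n) (j : Fin n) : V n :=
  Classical.choose (Tmap_surj D (Pi.single j 1))

lemma inner_om (D : RootData n) (i j : Fin n) :
    ⟪D.simple i, om D j⟫ = if i = j then 1 else 0 := by
  have := Classical.choose_spec (Tmap_surj D (Pi.single j 1))
  have h := congrFun this i
  simp only [Tmap, LinearMap.coe_mk, AddHom.coe_mk] at h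
  unfold om
  refine h.trans ?_
  by_cases hij : i = j <;> simp [hij, Pi.single_apply]

/-- Inner products with positive roots on `fund` lie in `[0,1]`. -/
lemma fund_inner_range (D : RootData n) {β : V n} (hβ : β ∈ D.pos) {v : V n}
    (hv : v ∈ fund D) : 0 ≤ ⟪β, v⟫ ∧ ⟪β, v⟫ ≤ 1 := by
  obtain ⟨hv1, hv2⟩ := hv
  obtain ⟨c, hc0, hc⟩ := D.pos_combo β hβ
  have hpos : 0 ≤ ⟪β, v⟫ := by
    rw [hc, sum_inner]
    apply Finset.sum_nonneg
    intro i _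
    rw [real_inner_smul_left]
    exact mul_nonneg (hc0 i) (hv1 i)
  refine ⟨hpos, ?_⟩
  obtain ⟨d, hd0, hd⟩ := D.highest_dominates β hβ
  have hdiff : 0 ≤ ⟪D.highest - β, v⟫ := by
    rw [hd, sum_inner]
    apply Finset.sum_nonneg
    intro i _
    rw [real_inner_smul_left]
    exact mul_nonneg (hd0 i) (hv1 i)
  rw [inner_sub_left] at hdiff
  linarith

/-- `fund` lies on one side of each hyperplane of the arrangement. -/
lemma fund_oneSide (D : RootData n) {β : V n} (hβ : β ∈ D.Φ) (m : ℤ) :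
    fund D ⊆ Hge β (m : ℝ) ∨ fund D ⊆ Hle β (m : ℝ) := by
  rcases D.pos_total β hβ with h | h
  · rcases le_or_gt (m : ℝ) 0 with hm | hm
    · left; intro v hv; exact le_trans hm (fund_inner_range D h hv).1
    · right; intro v hv
      have : (1 : ℝ) ≤ m := by exact_mod_cast hm
      exact le_trans (fund_inner_range D h hv).2 this
  · rcases le_or_gt 0 (m : ℝ) with hm | hm
    · right; intro v hv
      have := (fund_inner_range D h hv).1
      rw [inner_neg_left] at this
      simp only [Hle, Set.mem_setOf_eq]
      linarith
    · left; intro v hv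
      have h2 := (fund_inner_range D h hv).2
      rw [inner_neg_left] at h2
      have hm1 : (m : ℝ) ≤ -1 := by
        have : m < 0 := by exact_mod_cast hm
        have : m ≤ -1 := by omega
        exact_mod_cast this
      simp only [Hge, Set.mem_setOf_eq]
      linarith

/-- A regular point of the fundamental alcove. -/
def vstar (D : RootData n) : V n :=
  (1 / (⟪D.highest, ∑ j, om D j⟫ + 1)) • ∑ j, om D j

lemma inner_u_nonneg (D : RootData n) {β : V n} (hβ : β ∈ D.pos) :
    0 ≤ ⟪β, ∑ j, om D j⟫ := by
  obtain ⟨c, hc0, hc⟩ := D.pos_combo β hβ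
  rw [hc, sum_inner]
  apply Finset.sum_nonneg
  intro i _
  rw [real_inner_smul_left, inner_sum]
  simp only [inner_om]
  simp
  exact hc0 i

lemma inner_u_pos (D : RootData n) {β : V n} (hβ : β ∈ D.pos) :
    0 < ⟪β, ∑ j, om D j⟫ := by
  obtain ⟨c, hc0, hc⟩ := D.pos_combo β hβ
  have hne : ∃ i, c i ≠ 0 := by
    by_contra hall
    push_neg at hall
    apply D.nonzero β (D.pos_sub hβ)
    rw [hc]
    simp [hall]
  obtain ⟨i0, hi0⟩ := hne
  rw [hc, sum_inner]
  have hterm : ∀ i, ⟪c i • D.simple i, ∑ j, om D j⟫ = c i := by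
    intro i
    rw [real_inner_smul_left, inner_sum]
    simp only [inner_om]
    simp
  rw [Finset.sum_congr rfl (fun i _ => hterm i)]
  have : 0 < c i0 := lt_of_le_of_ne (hc0 i0) (Ne.symm hi0)
  exact Finset.sum_pos' (fun i _ => hc0 i) ⟨i0, Finset.mem_univ i0, this⟩

lemma vstar_mem (D : RootData n) : vstar D ∈ fund D := by
  set u := ∑ j, om D j with hu
  have hC : 0 < ⟪D.highest, u⟫ + 1 := by
    have := inner_u_nonneg D D.highest_mem
    linarith
  constructor
  · intro i
    rw [vstar, real_inner_smul_right]
    apply mul_nonneg (by positivity)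
    rw [inner_sum]
    simp only [inner_om]
    simp
  · rw [vstar, real_inner_smul_right]
    rw [div_mul_eq_mul_div, one_mul, div_le_one hC]
    linarith

lemma vstar_inner_mem (D : RootData n) {β : V n} (hβ : β ∈ D.pos) :
    0 < ⟪β, vstar D⟫ ∧ ⟪β, vstar D⟫ < 1 := by
  set u := ∑ j, om D j with hu
  have hC0 : 0 ≤ ⟪D.highest, u⟫ := inner_u_nonneg D D.highest_mem
  have hC : 0 < ⟪D.highest, u⟫ + 1 := by linarith
  constructor
  · rw [vstar, real_inner_smul_right]
    exact mul_pos (by positivity) (inner_u_pos D hβ)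
  · obtain ⟨d, hd0, hd⟩ := D.highest_dominates β hβ
    have hdom : ⟪β, u⟫ ≤ ⟪D.highest, u⟫ := by
      have : 0 ≤ ⟪D.highest - β, u⟫ := by
        rw [hd, sum_inner]
        apply Finset.sum_nonneg
        intro i _
        rw [real_inner_smul_left]
        have : 0 ≤ ⟪D.simple i, u⟫ := inner_u_nonneg D (D.simple_mem i)
        exact mul_nonneg (hd0 i) this
      rw [inner_sub_left] at this
      linarith
    rw [vstar, real_inner_smul_right, div_mul_eq_mul_div, one_mul, div_lt_one hC]
    linarith

/-- No integer hyperplane of the arrangement contains all of `fund`. -/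
lemma fund_not_subset_Hy (D : RootData n) {β : V n} (hβ : β ∈ D.Φ) (m : ℤ) :
    ¬ fund D ⊆ Hy β (m : ℝ) := by
  intro hsub
  have hmem := hsub (vstar_mem D)
  simp only [Hy, Set.mem_setOf_eq] at hmem
  rcases D.pos_total β hβ with h | h
  · obtain ⟨h1, h2⟩ := vstar_inner_mem D h
    rw [hmem] at h1 h2
    have : (0 : ℤ) < m := by exact_mod_cast h1
    have : m < 1 := by exact_mod_cast h2
    omega
  · obtain ⟨h1, h2⟩ := vstar_inner_mem D h
    rw [inner_neg_left] at h1 h2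
    rw [hmem] at h1 h2
    have : (0 : ℤ) < -m := by exact_mod_cast h1
    have : -m < 1 := by exact_mod_cast h2
    omega

end Aux
namespace Aux
variable {n : ℕ}

/-- The generating set of the affine Weyl group. -/
def genSet (D : RootData n) : Set (Equiv.Perm (V n)) :=
  {e : Equiv.Perm (V n) | ∃ α ∈ D.Φ, ∃ k : ℤ, ⇑e = sRefl α (k : ℝ)}

lemma AffW_eq_closure (D : RootData n) : AffW D = Subgroup.closure (genSet D) := rfl

lemma gen_sq {D : RootData n} {e : Equiv.Perm (V n)} (he : e ∈ genSet D) :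
    e * e = 1 := by
  obtain ⟨α, hα, k, hk⟩ := he
  apply Equiv.ext
  intro v
  rw [Equiv.Perm.mul_apply, Equiv.Perm.one_apply]
  rw [show ∀ w, e w = sRefl α (k:ℝ) w from congrFun hk]
  rw [show ∀ w, e w = sRefl α (k:ℝ) w from congrFun hk]
  exact sRefl_invol (D.nonzero α hα) _ v

lemma gen_inv {D : RootData n} {e : Equiv.Perm (V n)} (he : e ∈ genSet D) :
    e⁻¹ = e := inv_eq_of_mul_eq_one_left (gen_sq he)

/-- Every element of the affine Weyl group preserves distances. -/
lemma affW_dist {D : RootData n} (y : AffW D) (v w : V n) :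
    dist ((y : Equiv.Perm (V n)) v) ((y : Equiv.Perm (V n)) w) = dist v w := by
  have h : ∀ (x : Equiv.Perm (V n)), x ∈ Subgroup.closure (genSet D) →
      ∀ v w : V n, dist (x v) (x w) = dist v w := by
    intro x hx
    induction hx using Subgroup.closure_induction with
    | mem e he =>
      obtain ⟨α, hα, k, hk⟩ := he
      intro v w
      rw [show e v = sRefl α (k:ℝ) v from congrFun hk v,
        show e w = sRefl α (k:ℝ) w from congrFun hk w]
      exact sRefl_dist (D.nonzero α hα) _ v w
    | one => intro v w; simp
    | mul a b _ _ ha hb =>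
      intro v w
      rw [Equiv.Perm.mul_apply, Equiv.Perm.mul_apply, ha, hb]
    | inv a _ ha =>
      intro v w
      have := ha (a⁻¹ v) (a⁻¹ w)
      simp only [show ∀ (e : Equiv.Perm (V n)) w, e (e⁻¹ w) = w from fun e w => e.apply_symm_apply w] at this
      exact this.symm
  exact h _ y.2 v w

/-- The pullback property for arrangement hyperplanes. -/
def Qp (D : RootData n) (e : Equiv.Perm (V n)) : Prop :=
  ∀ β ∈ D.Φ, ∀ m : ℤ, ∃ β' ∈ D.Φ, ∃ m' : ℤ, ∀ v,
    ⟪β, e v⟫ - (m : ℝ) = ⟪β', v⟫ - (m' : ℝ)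

lemma gen_Qp {D : RootData n} {e : Equiv.Perm (V n)} (he : e ∈ genSet D) :
    Qp D e := by
  obtain ⟨α, hα, k, hk⟩ := he
  intro β hβ m
  obtain ⟨t, ht⟩ := D.crystallographic α hα β hβ
  refine ⟨β - (2 * ⟪α, β⟫ / ⟪α, α⟫) • α, D.reflect_mem α hα β hβ, m - t * k, ?_⟩
  intro v
  rw [show e v = sRefl α (k:ℝ) v from congrFun hk v]
  rw [inner_sRefl, inner_sub_left, real_inner_smul_left, ht]
  push_cast
  ring

lemma affW_Qp {D : RootData n} (y : AffW D) :
    Qp D (y : Equiv.Perm (V n)) ∧ Qp D ((y : Equiv.Perm (V n))⁻¹) := by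
  have h : ∀ (x : Equiv.Perm (V n)), x ∈ Subgroup.closure (genSet D) →
      Qp D x ∧ Qp D x⁻¹ := by
    intro x hx
    induction hx using Subgroup.closure_induction with
    | mem e he => exact ⟨gen_Qp he, by rw [gen_inv he]; exact gen_Qp he⟩
    | one =>
      constructor <;>
      · intro β hβ m
        exact ⟨β, hβ, m, by simp⟩
    | mul a b _ _ ha hb =>
      constructor
      · intro β hβ m
        obtain ⟨β1, hβ1, m1, h1⟩ := ha.1 β hβ m
        obtain ⟨β2, hβ2, m2, h2⟩ := hb.1 β1 hβ1 m1
        exact ⟨β2, hβ2, m2, fun v => by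
          rw [Equiv.Perm.mul_apply, h1 (b v), h2 v]⟩
      · intro β hβ m
        obtain ⟨β1, hβ1, m1, h1⟩ := hb.2 β hβ m
        obtain ⟨β2, hβ2, m2, h2⟩ := ha.2 β1 hβ1 m1
        refine ⟨β2, hβ2, m2, fun v => ?_⟩
        rw [mul_inv_rev, Equiv.Perm.mul_apply, h1 (a⁻¹ v), h2 v]
    | inv a _ ha => exact ⟨ha.2, by rw [inv_inv]; exact ha.1⟩
  exact h _ y.2

lemma affW_pull {D : RootData n} (y : AffW D) {β : V n} (hβ : β ∈ D.Φ) (m : ℤ) :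
    ∃ β' ∈ D.Φ, ∃ m' : ℤ, ∀ v,
      ⟪β, (y : Equiv.Perm (V n)) v⟫ - (m : ℝ) = ⟪β', v⟫ - (m' : ℝ) :=
  (affW_Qp y).1 β hβ m

/-- Transfer of half-space containment through the pullback property. -/
lemma image_subset_Hge_iff {e : Equiv.Perm (V n)} {β β' : V n} {m m' : ℝ}
    (hf : ∀ v, ⟪β, e v⟫ - m = ⟪β', v⟫ - m') (A : Set (V n)) :
    ⇑e '' A ⊆ Hge β m ↔ A ⊆ Hge β' m' := by
  rw [Set.image_subset_iff]
  constructor <;> intro h v hv <;> have := h hv <;>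
    simp only [Hge, Set.mem_preimage, Set.mem_setOf_eq] at * <;>
    have hfv := hf v <;> linarith

lemma image_subset_Hle_iff {e : Equiv.Perm (V n)} {β β' : V n} {m m' : ℝ}
    (hf : ∀ v, ⟪β, e v⟫ - m = ⟪β', v⟫ - m') (A : Set (V n)) :
    ⇑e '' A ⊆ Hle β m ↔ A ⊆ Hle β' m' := by
  rw [Set.image_subset_iff]
  constructor <;> intro h v hv <;> have := h hv <;>
    simp only [Hle, Set.mem_preimage, Set.mem_setOf_eq] at * <;>
    have hfv := hf v <;> linarith

lemma image_subset_Hy_iff {e : Equiv.Perm (V n)} {β β' : V n} {m m' : ℝ}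
    (hf : ∀ v, ⟪β, e v⟫ - m = ⟪β', v⟫ - m') (A : Set (V n)) :
    ⇑e '' A ⊆ Hy β m ↔ A ⊆ Hy β' m' := by
  rw [Set.image_subset_iff]
  constructor <;> intro h v hv <;> have := h hv <;>
    simp only [Hy, Set.mem_preimage, Set.mem_setOf_eq] at * <;>
    have hfv := hf v <;> linarith

/-- The image of `fund` under an affine Weyl group element lies on one side of each
hyperplane. -/
lemma actW_fund_oneSide {D : RootData n} (y : AffW D) {β : V n} (hβ : β ∈ D.Φ) (m : ℤ) :
    actW y (fund D) ⊆ Hge β (m : ℝ) ∨ actW y (fund D) ⊆ Hle β (m : ℝ) := by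
  obtain ⟨β', hβ', m', hf⟩ := affW_pull y hβ m
  rcases fund_oneSide D hβ' m' with h | h
  · left; rw [actW, image_subset_Hge_iff hf]; exact h
  · right; rw [actW, image_subset_Hle_iff hf]; exact h

lemma actW_fund_not_Hy {D : RootData n} (y : AffW D) {β : V n} (hβ : β ∈ D.Φ) (m : ℤ) :
    ¬ actW y (fund D) ⊆ Hy β (m : ℝ) := by
  obtain ⟨β', hβ', m', hf⟩ := affW_pull y hβ m
  rw [actW, image_subset_Hy_iff hf]
  exact fund_not_subset_Hy D hβ' m'

lemma Hge_inter_Hle (β : V n) (m : ℝ) : Hge β m ∩ Hle β m = Hy β m := by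
  ext v
  simp only [Hge, Hle, Hy, Set.mem_inter_iff, Set.mem_setOf_eq]
  constructor
  · rintro ⟨h1, h2⟩; linarith
  · intro h; constructor <;> linarith

lemma subset_Hy_of_both {X : Set (V n)} {β : V n} {m : ℝ}
    (h1 : X ⊆ Hge β m) (h2 : X ⊆ Hle β m) : X ⊆ Hy β m := by
  rw [← Hge_inter_Hle]
  exact Set.subset_inter h1 h2

end Aux
namespace Aux
variable {n : ℕ}

lemma norm_coroot_sq {α : V n} (hα : α ≠ 0) : ‖coroot α‖ ^ 2 = 4 / ⟪α, α⟫ := by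
  rw [coroot, norm_smul, mul_pow, Real.norm_eq_abs, sq_abs, ← real_inner_self_eq_norm_sq]
  set A := ⟪α, α⟫ with hA
  have hA0 : A ≠ 0 := inner_self_ne hα
  field_simp
  ring

lemma inner_self_pos' {α : V n} (hα : α ≠ 0) : 0 < ⟪α, α⟫ :=
  lt_of_le_of_ne real_inner_self_nonneg (Ne.symm (inner_self_ne hα))

/-- Scalar relation between two presentations of the same hyperplane. -/
lemma exists_scalar_of_Hy_eq {β α : V n} (hβ : β ≠ 0) (hα : α ≠ 0) {m k : ℝ}
    (h : Hy β m = Hy α k) : ∃ c : ℝ, c ≠ 0 ∧ β = c • α ∧ m = c * k := by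
  have hA0 : ⟪α, α⟫ ≠ 0 := inner_self_ne hα
  set v₀ : V n := (k / ⟪α, α⟫) • α with hv₀
  have hv₀mem : v₀ ∈ Hy α k := by
    simp only [Hy, Set.mem_setOf_eq, hv₀, real_inner_smul_right]
    exact div_mul_cancel₀ k hA0
  have hperp : ∀ w : V n, ⟪α, w⟫ = 0 → ⟪β, w⟫ = 0 := by
    intro w hw
    have h1 : v₀ + w ∈ Hy α k := by
      simp only [Hy, Set.mem_setOf_eq, inner_add_right, hw, add_zero]
      exact hv₀mem
    have h2 : v₀ ∈ Hy β m := h ▸ hv₀mem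
    have h3 : v₀ + w ∈ Hy β m := h ▸ h1
    simp only [Hy, Set.mem_setOf_eq, inner_add_right] at h2 h3
    linarith
  set c := ⟪α, β⟫ / ⟪α, α⟫ with hc
  have hw0 : ⟪α, β - c • α⟫ = 0 := by
    rw [inner_sub_right, real_inner_smul_right, hc, div_mul_cancel₀ _ hA0, sub_self]
  have hββ : ⟪β, β - c • α⟫ = 0 := hperp _ hw0
  have hself : ⟪β - c • α, β - c • α⟫ = 0 := by
    rw [inner_sub_left, hββ, real_inner_smul_left, hw0]
    ring
  have hβc : β = c • α := by
    have := inner_self_eq_zero.mp hself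
    exact sub_eq_zero.mp this
  have hcne : c ≠ 0 := by
    intro h0
    rw [h0, zero_smul] at hβc
    exact hβ hβc
  refine ⟨c, hcne, hβc, ?_⟩
  have h2 : v₀ ∈ Hy β m := h ▸ hv₀mem
  simp only [Hy, Set.mem_setOf_eq] at h2
  rw [← h2, hβc, real_inner_smul_left]
  simp only [Hy, Set.mem_setOf_eq] at hv₀mem
  rw [hv₀mem]

lemma Hy_eq_halves {β α : V n} (hβ : β ≠ 0) (hα : α ≠ 0) {m k : ℝ}
    (h : Hy β m = Hy α k) :
    (Hge β m = Hge α k ∧ Hle β m = Hle α k) ∨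
    (Hge β m = Hle α k ∧ Hle β m = Hge α k) := by
  obtain ⟨c, hc, hβc, hm⟩ := exists_scalar_of_Hy_eq hβ hα h
  rcases lt_or_gt_of_ne hc with hneg | hpos
  · right
    constructor <;> ext v <;>
      simp only [Hge, Hle, Set.mem_setOf_eq, hβc, real_inner_smul_left, hm] <;>
      constructor <;> intro hv <;> nlinarith
  · left
    constructor <;> ext v <;>
      simp only [Hge, Hle, Set.mem_setOf_eq, hβc, real_inner_smul_left, hm] <;>
      constructor <;> intro hv <;> nlinarith

lemma sameSide_of_Hy_eq {β α : V n} (hβ : β ≠ 0) (hα : α ≠ 0) {m k : ℝ}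
    (h : Hy β m = Hy α k) (X Y : Set (V n)) :
    sameSide β m X Y ↔ sameSide α k X Y := by
  unfold sameSide
  rcases Hy_eq_halves hβ hα h with ⟨h1, h2⟩ | ⟨h1, h2⟩ <;> rw [h1, h2] <;> tauto

/-- Points equidistant from `b` and its reflection lie on the hyperplane. -/
lemma eq_dist_imp_Hy {α : V n} (hα : α ≠ 0) {k : ℝ} {b x : V n}
    (hb : ⟪α, b⟫ ≠ k) (h : ‖x - b‖ = ‖x - sRefl α k b‖) : ⟪α, x⟫ = k := by
  have hA0 : ⟪α, α⟫ ≠ 0 := inner_self_ne hα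
  have hApos : 0 < ⟪α, α⟫ := inner_self_pos' hα
  set d := ⟪α, b⟫ - k with hd
  have hd0 : d ≠ 0 := sub_ne_zero.mpr hb
  have hx : x - sRefl α k b = (x - b) - (-d) • coroot α := by
    rw [sRefl_def, neg_smul]
    abel
  have hsq : ‖x - b‖ ^ 2 = ‖(x - b) - (-d) • coroot α‖ ^ 2 := by rw [← hx, h]
  have expand := norm_sub_sq_real (x - b) ((-d) • coroot α)
  rw [real_inner_smul_right, inner_coroot, norm_smul, mul_pow, Real.norm_eq_abs,
    sq_abs, norm_coroot_sq hα, inner_sub_right] at expand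
  rw [expand] at hsq
  set X := ⟪α, x⟫ with hX
  set B := ⟪α, b⟫ with hB
  set A := ⟪α, α⟫ with hA
  have key : d * (X - B + d) = 0 := by
    have h1 : 2 * (-d * (2 * (X - B) / A)) = (-d) ^ 2 * (4 / A) := by linarith [hsq]
    field_simp at h1
    rw [show X - B + d = 0 by linarith, mul_zero]
  have : X - B + d = 0 := by
    rcases mul_eq_zero.mp key with h0 | h0
    · exact absurd h0 hd0
    · exact h0
  rw [hd] at this
  linarith

/-- A point moved by an isometry fixing a hyperplane goes to its reflection. -/
lemma point_decomp {α : V n} (hα : α ≠ 0) {k : ℝ} {v w : V n}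
    (h : ∀ h₀ ∈ Hy α k, ‖w - h₀‖ = ‖v - h₀‖) : w = v ∨ w = sRefl α k v := by
  have hA0 : ⟪α, α⟫ ≠ 0 := inner_self_ne hα
  set h₀ : V n := (k / ⟪α, α⟫) • α with hh₀
  have hh₀mem : h₀ ∈ Hy α k := by
    simp only [Hy, Set.mem_setOf_eq, hh₀, real_inner_smul_right]
    exact div_mul_cancel₀ k hA0
  have hperp : ∀ u : V n, ⟪α, u⟫ = 0 → ⟪w - v, u⟫ = 0 := by
    intro u hu
    have h1 : h₀ + u ∈ Hy α k := by
      simp only [Hy, Set.mem_setOf_eq, inner_add_right, hu, add_zero]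
      exact hh₀mem
    have e1 := h _ hh₀mem
    have e2 := h _ h1
    have e1sq : ‖w - h₀‖ ^ 2 = ‖v - h₀‖ ^ 2 := by rw [e1]
    have e2sq : ‖w - h₀ - u‖ ^ 2 = ‖v - h₀ - u‖ ^ 2 := by
      rw [show w - (h₀ + u) = w - h₀ - u by abel, show v - (h₀ + u) = v - h₀ - u by abel] at e2
      rw [e2]
    have eL := norm_sub_sq_real (w - h₀) u
    have eR := norm_sub_sq_real (v - h₀) u
    rw [eL, eR] at e2sq
    have hwv : ⟪w - h₀, u⟫ - ⟪v - h₀, u⟫ = ⟪w - v, u⟫ := by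
      rw [← inner_sub_left]
      congr 1
      abel
    linarith [e2sq, e1sq, hwv]
  set c := ⟪α, w - v⟫ / ⟪α, α⟫ with hc
  have hw0 : ⟪α, (w - v) - c • α⟫ = 0 := by
    rw [inner_sub_right, real_inner_smul_right, hc, div_mul_cancel₀ _ hA0, sub_self]
  have hwv0 : ⟪w - v, (w - v) - c • α⟫ = 0 := hperp _ hw0
  have hself : ⟪(w - v) - c • α, (w - v) - c • α⟫ = 0 := by
    rw [inner_sub_left, hwv0, real_inner_smul_left, zero_sub, neg_eq_zero, hw0, mul_zero]
  have hwvc : w - v = c • α := sub_eq_zero.mp (inner_self_eq_zero.mp hself)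
  have hwev : w = v + c • α := by rw [← hwvc]; abel
  have e1 := h _ hh₀mem
  have e1sq : ‖w - h₀‖ ^ 2 = ‖v - h₀‖ ^ 2 := by rw [e1]
  rw [hwev, show v + c • α - h₀ = (v - h₀) - (-c) • α by rw [neg_smul]; abel] at e1sq
  have expand := norm_sub_sq_real (v - h₀) ((-c) • α)
  rw [real_inner_smul_right, norm_smul, mul_pow, Real.norm_eq_abs, sq_abs,
    ← real_inner_self_eq_norm_sq α] at expand
  rw [expand] at e1sq
  have hinner : ⟪v - h₀, α⟫ = ⟪α, v⟫ - k := by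
    rw [real_inner_comm, inner_sub_right]
    simp only [Hy, Set.mem_setOf_eq] at hh₀mem
    rw [hh₀mem]
  rw [hinner] at e1sq
  have key : c * (2 * (⟪α, v⟫ - k) + c * ⟪α, α⟫) = 0 := by nlinarith [e1sq]
  rcases mul_eq_zero.mp key with h0 | h0
  · left; rw [hwev, h0, zero_smul, add_zero]
  · right
    have hc2 : c = -((⟪α, v⟫ - k) * 2) / ⟪α, α⟫ := by
      rw [eq_div_iff hA0]
      linarith
    rw [hwev, sRefl_def, coroot, smul_smul, hc2]
    rw [show -((⟪α, v⟫ - k) * 2) / ⟪α, α⟫ = -((⟪α, v⟫ - k) * (2 / ⟪α, α⟫)) by ring,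
      neg_smul]
    abel

/-- Classification: an isometry of `V` fixing the hyperplane `H_{α,k}` pointwise is the
identity or the reflection `s_{α,k}`. -/
lemma isometry_fix_hyperplane {α : V n} (hα : α ≠ 0) {k : ℝ} {f : V n → V n}
    (hd : ∀ v w, dist (f v) (f w) = dist v w)
    (hfix : ∀ v, ⟪α, v⟫ = k → f v = v) (hne : f ≠ id) :
    f = sRefl α k := by
  have step1 : ∀ v, f v = v ∨ f v = sRefl α k v := by
    intro v
    apply point_decomp hα
    intro h₀ hh₀
    have : f h₀ = h₀ := hfix h₀ hh₀
    calc ‖f v - h₀‖ = ‖f v - f h₀‖ := by rw [this]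
    _ = dist (f v) (f h₀) := (dist_eq_norm _ _).symm
    _ = dist v h₀ := hd v h₀
    _ = ‖v - h₀‖ := dist_eq_norm _ _
  have hex : ∃ a, f a ≠ a := by
    by_contra hc
    push_neg at hc
    exact hne (funext hc)
  obtain ⟨a, ha⟩ := hex
  have hfa : f a = sRefl α k a := (step1 a).resolve_left ha
  have hak : ⟪α, a⟫ ≠ k := by
    intro h0
    exact ha (hfix a h0)
  funext v
  rcases step1 v with hv | hv
  · by_cases hvk : ⟪α, v⟫ = k
    · rw [hv, sRefl_fix hvk]
    · exfalso
      have : dist (f v) (f a) = dist v a := hd v a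
      rw [hv, hfa, dist_eq_norm, dist_eq_norm] at this
      have := eq_dist_imp_Hy hα hak this.symm
      exact hvk this
  · exact hv

end Aux
namespace Aux
variable {n : ℕ}

lemma coroot_ne_zero {α : V n} (hα : α ≠ 0) : coroot α ≠ 0 :=
  smul_ne_zero (div_ne_zero two_ne_zero (inner_self_ne hα)) hα

lemma fix_set_sRefl {α : V n} (hα : α ≠ 0) (k : ℝ) :
    {v : V n | sRefl α k v = v} = Hy α k := by
  ext v
  simp only [Set.mem_setOf_eq, Hy, sRefl_def, sub_eq_self, smul_eq_zero]
  constructor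
  · rintro (h | h)
    · linarith [sub_eq_zero.mp (by linarith [h] : ⟪α, v⟫ - k = 0)]
    · exact absurd h (coroot_ne_zero hα)
  · intro h
    left
    rw [h, sub_self]

/-- The key uniqueness lemma: if a hyperplane contains the facet `fund ∩ H_{β₀,c₀}`,
it equals `H_{β₀,c₀}`. -/
lemma facet_unique {D : RootData n} {β₀ : V n} (hβ₀ : β₀ ≠ 0) {c₀ : ℝ} {v₀ : V n}
    (hv₀f : v₀ ∈ fund D) (hv₀ : ⟪β₀, v₀⟫ = c₀)
    (hpert : ∀ w : V n, ⟪β₀, w⟫ = 0 →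
      ∃ t : ℝ, 0 < t ∧ v₀ + t • w ∈ fund D ∧ v₀ - t • w ∈ fund D)
    {β : V n} (hβ : β ≠ 0) {m : ℝ}
    (hsub : fund D ∩ Hy β₀ c₀ ⊆ Hy β m) : Hy β m = Hy β₀ c₀ := by
  have hA0 : ⟪β₀, β₀⟫ ≠ 0 := inner_self_ne hβ₀
  have hm : ⟪β, v₀⟫ = m := hsub ⟨hv₀f, hv₀⟩
  have hperp : ∀ w : V n, ⟪β₀, w⟫ = 0 → ⟪β, w⟫ = 0 := by
    intro w hw
    obtain ⟨t, ht, hp, hq⟩ := hpert w hw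
    have hpH : v₀ + t • w ∈ Hy β₀ c₀ := by
      simp only [Hy, Set.mem_setOf_eq, inner_add_right, real_inner_smul_right, hw,
        mul_zero, add_zero]
      exact hv₀
    have hqH : v₀ - t • w ∈ Hy β₀ c₀ := by
      simp only [Hy, Set.mem_setOf_eq, inner_sub_right, real_inner_smul_right, hw,
        mul_zero, sub_zero]
      exact hv₀
    have h1 := hsub ⟨hp, hpH⟩
    have h2 := hsub ⟨hq, hqH⟩
    simp only [Hy, Set.mem_setOf_eq, inner_add_right, inner_sub_right,
      real_inner_smul_right] at h1 h2
    have : t * ⟪β, w⟫ = 0 := by linarith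
    rcases mul_eq_zero.mp this with h0 | h0
    · exact absurd h0 (ne_of_gt ht)
    · exact h0
  set c := ⟪β₀, β⟫ / ⟪β₀, β₀⟫ with hc
  have hw0 : ⟪β₀, β - c • β₀⟫ = 0 := by
    rw [inner_sub_right, real_inner_smul_right, hc, div_mul_cancel₀ _ hA0, sub_self]
  have hββ : ⟪β, β - c • β₀⟫ = 0 := hperp _ hw0
  have hself : ⟪β - c • β₀, β - c • β₀⟫ = 0 := by
    rw [inner_sub_left, hββ, real_inner_smul_left, hw0, mul_zero, sub_zero]
  have hβc : β = c • β₀ := sub_eq_zero.mp (inner_self_eq_zero.mp hself)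
  have hcne : c ≠ 0 := fun h0 => hβ (by rw [hβc, h0, zero_smul])
  have hmc : m = c * c₀ := by
    rw [← hm, hβc, real_inner_smul_left, hv₀]
  ext v
  simp only [Hy, Set.mem_setOf_eq, hβc, real_inner_smul_left, hmc]
  constructor
  · intro h; exact mul_left_cancel₀ hcne h
  · intro h; rw [h]

lemma inner_om_nonneg (D : RootData n) {β : V n} (hβ : β ∈ D.pos) (j : Fin n) :
    0 ≤ ⟪β, om D j⟫ := by
  obtain ⟨c, hc0, hc⟩ := D.pos_combo β hβ
  rw [hc, sum_inner]
  have : ∀ i, ⟪c i • D.simple i, om D j⟫ = if i = j then c i else 0 := by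
    intro i
    rw [real_inner_smul_left, inner_om]
    by_cases hij : i = j <;> simp [hij]
  rw [Finset.sum_congr rfl (fun i _ => this i)]
  simp only [Finset.sum_ite_eq', Finset.mem_univ, if_true]
  exact hc0 j

lemma inner_simple_u (D : RootData n) (i : Fin n) :
    ⟪D.simple i, ∑ j, om D j⟫ = 1 := by
  rw [inner_sum]
  simp only [inner_om]
  simp

set_option maxHeartbeats 2000000 in
/-- The facet data for a generator: the presentation of its fixed hyperplane together
with the uniqueness property. -/
lemma sgen_facet {D : RootData n} {s : AffW D} (hs : s ∈ SGen D) :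
    ∃ β₀ ∈ D.Φ, ∃ c₀ : ℝ, ⇑(s : Equiv.Perm (V n)) = sRefl β₀ c₀ ∧
      {v : V n | (s : Equiv.Perm (V n)) v = v} = Hy β₀ c₀ ∧
      ∀ β ∈ D.Φ, ∀ m : ℝ, (fund D ∩ Hy β₀ c₀ ⊆ Hy β m) → Hy β m = Hy β₀ c₀ := by
  set u : V n := ∑ j, om D j with hu
  rcases hs with hs | ⟨i, hs⟩
  · -- s = s_{α̃, 1}
    have hβ₀Φ : D.highest ∈ D.Φ := D.pos_sub D.highest_mem
    have hβ₀ : D.highest ≠ 0 := D.nonzero _ hβ₀Φ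
    refine ⟨D.highest, hβ₀Φ, 1, hs, ?_, ?_⟩
    · rw [show {v : V n | (s : Equiv.Perm (V n)) v = v}
        = {v : V n | sRefl D.highest 1 v = v} by rw [hs]]
      exact fix_set_sRefl hβ₀ 1
    · intro β hβ m hsub
      have hC : 0 < ⟪D.highest, u⟫ := inner_u_pos D D.highest_mem
      set v₀ : V n := (1 / ⟪D.highest, u⟫) • u with hv₀def
      have hsimple : ∀ j, ⟪D.simple j, v₀⟫ = 1 / ⟪D.highest, u⟫ := by
        intro j
        rw [hv₀def, real_inner_smul_right, inner_simple_u, mul_one]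
      have hv₀h : ⟪D.highest, v₀⟫ = 1 := by
        rw [hv₀def, real_inner_smul_right, one_div, inv_mul_cancel₀ (ne_of_gt hC)]
      have hv₀f : v₀ ∈ fund D := by
        constructor
        · intro j
          rw [hsimple j]
          positivity
        · rw [hv₀h]
      apply facet_unique hβ₀ hv₀f hv₀h _ (D.nonzero β hβ) hsub
      intro w hw
      set S : ℝ := ∑ j, |⟪D.simple j, w⟫| with hS
      have hS0 : 0 ≤ S := Finset.sum_nonneg fun j _ => abs_nonneg _
      refine ⟨(1 / ⟪D.highest, u⟫) / (1 + S), by positivity, ?_, ?_⟩ <;>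
      · constructor
        · intro j
          simp only [inner_add_right, inner_sub_right, real_inner_smul_right, hsimple j]
          set a : ℝ := ⟪D.simple j, w⟫ with ha
          set t' : ℝ := (1 / ⟪D.highest, u⟫) / (1 + S) with ht'def
          have ht' : 0 ≤ t' := by positivity
          have h1 : |a| ≤ S := by
            rw [hS, ha]
            exact Finset.single_le_sum (f := fun j => |⟪D.simple j, w⟫|)
              (fun j _ => abs_nonneg _) (Finset.mem_univ j)
          have hbound : t' * |a| ≤ 1 / ⟪D.highest, u⟫ := by
            rw [ht'def, div_mul_eq_mul_div, div_le_iff₀ (by positivity)]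
            exact mul_le_mul_of_nonneg_left (by linarith) (by positivity)
          have hl : -(t' * |a|) ≤ t' * a := by nlinarith [neg_abs_le a]
          have hr : t' * a ≤ t' * |a| := mul_le_mul_of_nonneg_left (le_abs_self _) ht'
          linarith
        · simp only [inner_add_right, inner_sub_right, real_inner_smul_right, hv₀h, hw,
            mul_zero, add_zero, sub_zero]
          exact le_rfl
  · -- s = s_{αᵢ, 0}
    have hβ₀Φ : D.simple i ∈ D.Φ := D.pos_sub (D.simple_mem i)
    have hβ₀ : D.simple i ≠ 0 := D.nonzero _ hβ₀Φ
    refine ⟨D.simple i, hβ₀Φ, 0, hs, ?_, ?_⟩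
    · rw [show {v : V n | (s : Equiv.Perm (V n)) v = v}
        = {v : V n | sRefl (D.simple i) 0 v = v} by rw [hs]]
      exact fix_set_sRefl hβ₀ 0
    · intro β hβ m hsub
      set C' : ℝ := ⟪D.highest, u - om D i⟫ with hC'
      have hC'0 : 0 ≤ C' := by
        rw [hC', inner_sub_right, hu, inner_sum]
        have h1 : ⟪D.highest, om D i⟫ ≤ ∑ j, ⟪D.highest, om D j⟫ :=
          Finset.single_le_sum (f := fun j => ⟪D.highest, om D j⟫)
            (fun j _ => inner_om_nonneg D D.highest_mem j) (Finset.mem_univ i)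
        linarith
      have hC'1 : (0:ℝ) < 1 + C' := by linarith
      set ε : ℝ := 1 / (1 + C') with hε
      have hε0 : 0 < ε := by rw [hε]; exact div_pos one_pos hC'1
      have hεC' : ε * C' ≤ 1 := by
        rw [hε, div_mul_eq_mul_div, one_mul, div_le_one hC'1]
        linarith
      set v₀ : V n := ε • (u - om D i) with hv₀def
      have hsimple : ∀ j, ⟪D.simple j, v₀⟫ = if j = i then 0 else ε := by
        intro j
        rw [hv₀def, real_inner_smul_right, inner_sub_right, inner_simple_u, inner_om]
        by_cases hij : j = i <;> simp [hij]
      have hv₀h : ⟪D.highest, v₀⟫ = ε * C' := by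
        rw [hv₀def, real_inner_smul_right, hC']
      have hv₀i : ⟪D.simple i, v₀⟫ = 0 := by rw [hsimple i]; simp
      have hv₀f : v₀ ∈ fund D := by
        constructor
        · intro j
          rw [hsimple j]
          by_cases hij : j = i <;> simp [hij]
          exact le_of_lt hε0
        · rw [hv₀h]; exact hεC'
      apply facet_unique hβ₀ hv₀f hv₀i _ (D.nonzero β hβ) hsub
      intro w hw
      set S : ℝ := (∑ j, |⟪D.simple j, w⟫|) + |⟪D.highest, w⟫| with hS
      have hS0 : 0 ≤ S := by
        rw [hS]
        have h2 : (0:ℝ) ≤ ∑ j, |⟪D.simple j, w⟫| := Finset.sum_nonneg fun j _ => abs_nonneg _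
        have h3 := abs_nonneg ⟪D.highest, w⟫
        linarith
      have hS1 : (0:ℝ) < 1 + S := by linarith
      have htb : ∀ a : ℝ, |a| ≤ S → (ε / (1 + S)) * |a| ≤ ε := by
        intro a ha
        rw [div_mul_eq_mul_div, div_le_iff₀ hS1]
        exact mul_le_mul_of_nonneg_left (by linarith) (le_of_lt hε0)
      refine ⟨ε / (1 + S), div_pos hε0 hS1, ?_, ?_⟩ <;>
      · constructor
        · intro j
          simp only [inner_add_right, inner_sub_right, real_inner_smul_right]
          rw [hsimple j]
          by_cases hij : j = i
          · subst hij
            rw [hw]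
            simp
          · simp only [hij, if_false]
            set a : ℝ := ⟪D.simple j, w⟫ with ha
            have h1 : |a| ≤ S := by
              rw [hS, ha]
              have h2 := Finset.single_le_sum (f := fun j => |⟪D.simple j, w⟫|)
                (fun j _ => abs_nonneg _) (Finset.mem_univ j)
              have h3 := abs_nonneg ⟪D.highest, w⟫
              linarith
            have hb := htb _ h1
            have ht' : 0 ≤ ε / (1 + S) := le_of_lt (div_pos hε0 hS1)
            have hl : -((ε / (1 + S)) * |a|) ≤ (ε / (1 + S)) * a := by
              nlinarith [neg_abs_le a]
            have hr : (ε / (1 + S)) * a ≤ (ε / (1 + S)) * |a| :=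
              mul_le_mul_of_nonneg_left (le_abs_self _) ht'
            linarith
        · simp only [inner_add_right, inner_sub_right, real_inner_smul_right]
          rw [hv₀h]
          set a : ℝ := ⟪D.highest, w⟫ with ha
          have h1 : |a| ≤ S := by
            rw [hS, ha]
            have h2 : (0:ℝ) ≤ ∑ j, |⟪D.simple j, w⟫| :=
              Finset.sum_nonneg fun j _ => abs_nonneg _
            linarith [le_abs_self a, neg_abs_le a, abs_nonneg a]
          have hb := htb _ h1
          have ht' : 0 ≤ ε / (1 + S) := le_of_lt (div_pos hε0 hS1)
          have hεsum : ε * (1 + C') = 1 := by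
            rw [hε]
            exact one_div_mul_cancel (ne_of_gt hC'1)
          have hl : -((ε / (1 + S)) * |a|) ≤ (ε / (1 + S)) * a := by
            nlinarith [neg_abs_le a]
          have hr : (ε / (1 + S)) * a ≤ (ε / (1 + S)) * |a| :=
            mul_le_mul_of_nonneg_left (le_abs_self _) ht'
          nlinarith [hb, hl, hr, hεsum]
end Aux
namespace Aux
variable {n : ℕ}

lemma sgen_sq {D : RootData n} {s : AffW D} (hs : s ∈ SGen D) : s * s = 1 := by
  obtain ⟨β₀, hβ₀Φ, c₀, hform, -, -⟩ := sgen_facet hs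
  apply Subtype.ext
  apply Equiv.ext
  intro v
  rw [Subgroup.coe_mul, Equiv.Perm.mul_apply]
  rw [show ∀ w, (s : Equiv.Perm (V n)) w = sRefl β₀ c₀ w from congrFun hform]
  rw [show ∀ w, (s : Equiv.Perm (V n)) w = sRefl β₀ c₀ w from congrFun hform]
  rw [sRefl_invol (D.nonzero _ hβ₀Φ)]
  rfl

lemma sgen_moves {D : RootData n} {s : AffW D} (hs : s ∈ SGen D) :
    ∃ p : V n, (s : Equiv.Perm (V n)) p ≠ p := by
  obtain ⟨β₀, hβ₀Φ, c₀, hform, hfix, -⟩ := sgen_facet hs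
  have hβ₀ : β₀ ≠ 0 := D.nonzero _ hβ₀Φ
  have hA0 : ⟪β₀, β₀⟫ ≠ 0 := inner_self_ne hβ₀
  refine ⟨((c₀ + 1) / ⟪β₀, β₀⟫) • β₀, ?_⟩
  intro hp
  have hmem : ((c₀ + 1) / ⟪β₀, β₀⟫) • β₀ ∈ {v : V n | (s : Equiv.Perm (V n)) v = v} := hp
  rw [hfix] at hmem
  simp only [Hy, Set.mem_setOf_eq, real_inner_smul_right] at hmem
  rw [div_mul_cancel₀ _ hA0] at hmem
  linarith

/-- Conjugating a generator by an element carrying its facet into `H_{α,k}` yields the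
reflection `s_{α,k}`. -/
lemma conj_eq_sRefl {D : RootData n} (x s : AffW D) (hs : s ∈ SGen D)
    {α : V n} (hα : α ∈ D.Φ) (k : ℤ)
    (hP : ⇑(x : Equiv.Perm (V n)) ''
        (fund D ∩ {v : V n | (s : Equiv.Perm (V n)) v = v}) ⊆ Hy α (k : ℝ)) :
    ⇑((x * s * x⁻¹ : AffW D) : Equiv.Perm (V n)) = sRefl α (k : ℝ) := by
  obtain ⟨β₀, hβ₀Φ, c₀, hform, hfix, huniq⟩ := sgen_facet hs
  obtain ⟨β₂, hβ₂, m₂, hf⟩ := affW_pull x hα k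
  have hPull : fund D ∩ {v : V n | (s : Equiv.Perm (V n)) v = v} ⊆ Hy β₂ (m₂ : ℝ) := by
    intro v hv
    have h1 : (x : Equiv.Perm (V n)) v ∈ Hy α (k : ℝ) := hP ⟨v, hv, rfl⟩
    simp only [Hy, Set.mem_setOf_eq] at h1 ⊢
    have := hf v
    linarith
  rw [hfix] at hPull
  have hHeq : Hy β₂ (m₂ : ℝ) = {v : V n | (s : Equiv.Perm (V n)) v = v} := by
    rw [hfix]
    exact huniq β₂ hβ₂ _ hPull
  have hcoe : ∀ v, ((x * s * x⁻¹ : AffW D) : Equiv.Perm (V n)) v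
      = (x : Equiv.Perm (V n)) ((s : Equiv.Perm (V n))
        (((x : Equiv.Perm (V n)))⁻¹ v)) := by
    intro v
    rw [Subgroup.coe_mul, Subgroup.coe_mul, Equiv.Perm.mul_apply, Equiv.Perm.mul_apply]
    norm_cast
  have hfixf : ∀ v : V n, ⟪α, v⟫ = (k : ℝ) →
      ((x * s * x⁻¹ : AffW D) : Equiv.Perm (V n)) v = v := by
    intro v hv
    have h1 := hf (((x : Equiv.Perm (V n)))⁻¹ v)
    rw [show ∀ (e : Equiv.Perm (V n)) w, e (e⁻¹ w) = w from fun e w => e.apply_symm_apply w] at h1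
    have h2 : ((x : Equiv.Perm (V n)))⁻¹ v ∈ Hy β₂ (m₂ : ℝ) := by
      simp only [Hy, Set.mem_setOf_eq]
      linarith [h1, hv]
    rw [hHeq] at h2
    rw [hcoe, h2, show ∀ (e : Equiv.Perm (V n)) w, e (e⁻¹ w) = w from fun e w => e.apply_symm_apply w]
  have hdist := affW_dist (x * s * x⁻¹)
  have hne : ⇑((x * s * x⁻¹ : AffW D) : Equiv.Perm (V n)) ≠ id := by
    intro hid
    obtain ⟨p, hp⟩ := sgen_moves hs
    apply hp
    have := congrFun hid ((x : Equiv.Perm (V n)) p)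
    rw [hcoe, show ∀ (e : Equiv.Perm (V n)) w, e⁻¹ (e w) = w from fun e w => e.symm_apply_apply w, id_eq] at this
    exact (Equiv.injective _) this
  exact isometry_fix_hyperplane (D.nonzero α hα) hdist hfixf hne

/-- A separating hyperplane contains the image of the common facet. -/
lemma P_image_subset_of_sep {D : RootData n} (y s : AffW D) {β : V n} {m : ℝ}
    (hsep : Separates β m (actW y (fund D)) (actW (y * s) (fund D))) :
    ⇑(y : Equiv.Perm (V n)) ''
      (fund D ∩ {v : V n | (s : Equiv.Perm (V n)) v = v}) ⊆ Hy β m := by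
  rintro a ⟨v, ⟨hvf, hvfix⟩, rfl⟩
  have h1 : (y : Equiv.Perm (V n)) v ∈ actW y (fund D) := ⟨v, hvf, rfl⟩
  have h2 : (y : Equiv.Perm (V n)) v ∈ actW (y * s) (fund D) := by
    refine ⟨v, hvf, ?_⟩
    rw [Subgroup.coe_mul, Equiv.Perm.mul_apply, hvfix]
  rw [← Hge_inter_Hle]
  rcases hsep with ⟨ha, hb⟩ | ⟨ha, hb⟩
  · exact ⟨ha h1, hb h2⟩
  · exact ⟨hb h2, ha h1⟩

/-- `H_{α,k}` separating `y·fund` from `ys·fund` forces `ys = s_{α,k} ∘ y`. -/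
lemma ys_eq_refl_y {D : RootData n} (y s : AffW D) (hs : s ∈ SGen D)
    {α : V n} (hα : α ∈ D.Φ) (k : ℤ)
    (hsep : Separates α (k : ℝ) (actW y (fund D)) (actW (y * s) (fund D))) :
    ∀ v, ((y * s : AffW D) : Equiv.Perm (V n)) v = sRefl α (k : ℝ)
      ((y : Equiv.Perm (V n)) v) := by
  have hconj := conj_eq_sRefl y s hs hα k (P_image_subset_of_sep y s hsep)
  intro v
  have hgrp : (y * s : AffW D) = (y * s * y⁻¹) * y := by group
  rw [hgrp, Subgroup.coe_mul, Equiv.Perm.mul_apply, hconj]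

/-- Any hyperplane separating `y·fund` from `ys·fund` equals `H_{α,k}`. -/
lemma sep_unique {D : RootData n} (y s : AffW D) (hs : s ∈ SGen D)
    {α : V n} (hα : α ∈ D.Φ) (k : ℤ)
    (hsep : Separates α (k : ℝ) (actW y (fund D)) (actW (y * s) (fund D)))
    {β : V n} (hβ : β ∈ D.Φ) (m : ℤ)
    (hsepβ : Separates β (m : ℝ) (actW y (fund D)) (actW (y * s) (fund D))) :
    Hy β (m : ℝ) = Hy α (k : ℝ) := by
  obtain ⟨β₀, hβ₀Φ, c₀, hform, hfix, huniq⟩ := sgen_facet hs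
  obtain ⟨α₂, hα₂, k₂, hfα⟩ := affW_pull y hα k
  obtain ⟨β₂, hβ₂, m₂, hfβ⟩ := affW_pull y hβ m
  have hP1 := P_image_subset_of_sep y s hsep
  have hP2 := P_image_subset_of_sep y s hsepβ
  have hsubα : fund D ∩ {v : V n | (s : Equiv.Perm (V n)) v = v} ⊆ Hy α₂ (k₂ : ℝ) := by
    intro v hv
    have h1 : (y : Equiv.Perm (V n)) v ∈ Hy α (k : ℝ) := hP1 ⟨v, hv, rfl⟩
    simp only [Hy, Set.mem_setOf_eq] at h1 ⊢
    have := hfα v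
    linarith
  have hsubβ : fund D ∩ {v : V n | (s : Equiv.Perm (V n)) v = v} ⊆ Hy β₂ (m₂ : ℝ) := by
    intro v hv
    have h1 : (y : Equiv.Perm (V n)) v ∈ Hy β (m : ℝ) := hP2 ⟨v, hv, rfl⟩
    simp only [Hy, Set.mem_setOf_eq] at h1 ⊢
    have := hfβ v
    linarith
  rw [hfix] at hsubα hsubβ
  have heq1 : Hy α₂ (k₂ : ℝ) = Hy β₀ c₀ := huniq α₂ hα₂ _ hsubα
  have heq2 : Hy β₂ (m₂ : ℝ) = Hy β₀ c₀ := huniq β₂ hβ₂ _ hsubβ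
  ext v
  have h1 := hfβ (((y : Equiv.Perm (V n)))⁻¹ v)
  have h2 := hfα (((y : Equiv.Perm (V n)))⁻¹ v)
  rw [show ∀ (e : Equiv.Perm (V n)) w, e (e⁻¹ w) = w from fun e w => e.apply_symm_apply w] at h1 h2
  have hmem : ((y : Equiv.Perm (V n)))⁻¹ v ∈ Hy β₂ (m₂:ℝ)
      ↔ ((y : Equiv.Perm (V n)))⁻¹ v ∈ Hy α₂ (k₂:ℝ) := by
    rw [heq1, heq2]
  simp only [Hy, Set.mem_setOf_eq] at hmem ⊢
  constructor
  · intro h; have := hmem.mp (by linarith); linarith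
  · intro h; have := hmem.mpr (by linarith); linarith

/-- Away from `H_{α,k}`, the alcoves `y·fund` and `ys·fund` are on the same side. -/
lemma sameSide_y_ys {D : RootData n} (y s : AffW D) (hs : s ∈ SGen D)
    {α : V n} (hα : α ∈ D.Φ) (k : ℤ)
    (hsep : Separates α (k : ℝ) (actW y (fund D)) (actW (y * s) (fund D)))
    {β : V n} (hβ : β ∈ D.Φ) (m : ℤ)
    (hne : Hy β (m : ℝ) ≠ Hy α (k : ℝ)) :
    sameSide β (m : ℝ) (actW y (fund D)) (actW (y * s) (fund D)) := by
  rcases actW_fund_oneSide y hβ m with h1 | h1 <;>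
    rcases actW_fund_oneSide (y * s) hβ m with h2 | h2
  · exact Or.inl ⟨h1, h2⟩
  · exact absurd (sep_unique y s hs hα k hsep hβ m (Or.inl ⟨h1, h2⟩)) hne
  · exact absurd (sep_unique y s hs hα k hsep hβ m (Or.inr ⟨h1, h2⟩)) hne
  · exact Or.inr ⟨h1, h2⟩

end Aux
namespace Aux
variable {n : ℕ}

lemma actW_one (D : RootData n) (A : Set (V n)) : actW (1 : AffW D) A = A := by
  rw [actW]
  have : ((1 : AffW D) : Equiv.Perm (V n)) = 1 := rfl
  rw [this]
  simp

lemma Hle_neg (α : V n) (k : ℝ) : Hle (-α) (-k) = Hge α k := by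
  ext v
  simp only [Hle, Hge, Set.mem_setOf_eq, inner_neg_left]
  constructor <;> intro h <;> linarith

lemma Hge_neg (α : V n) (k : ℝ) : Hge (-α) (-k) = Hle α k := by
  ext v
  simp only [Hle, Hge, Set.mem_setOf_eq, inner_neg_left]
  constructor <;> intro h <;> linarith

/-- The folding of a positive word at the first crossing of `H_{α,k}`. -/
lemma fold_word {D : RootData n} {α : V n} (hα : α ∈ D.Φ) (k : ℤ)
    (l : List (AffW D)) (hl : ∀ t ∈ l, t ∈ SGen D)
    (hfund : fund D ⊆ Hle α (k : ℝ))
    (hy : ¬ actW l.prod (fund D) ⊆ Hle α (k : ℝ)) :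
    ∃ l' : List (AffW D), (∀ t ∈ l', t ∈ SGen D) ∧ l'.length + 1 = l.length ∧
      ∀ v, ((l'.prod : AffW D) : Equiv.Perm (V n)) v
        = sRefl α (k : ℝ) (((l.prod : AffW D) : Equiv.Perm (V n)) v) := by
  have hPex : ∃ j, j ≤ l.length ∧ ¬ actW ((l.take j).prod) (fund D) ⊆ Hle α (k : ℝ) := by
    refine ⟨l.length, le_refl _, ?_⟩
    rw [List.take_length]
    exact hy
  classical
  obtain ⟨j₀, hj₀def⟩ : ∃ j₀, j₀ = Nat.find hPex := ⟨_, rfl⟩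
  have hspec := Nat.find_spec hPex
  rw [← hj₀def] at hspec
  obtain ⟨hj₀m, hj₀not⟩ := hspec
  have hj₀pos : 1 ≤ j₀ := by
    rcases Nat.eq_zero_or_pos j₀ with h0 | h0
    · exfalso
      apply hj₀not
      rw [h0, List.take_zero, List.prod_nil, actW_one]
      exact hfund
    · exact h0
  have hprev : actW ((l.take (j₀ - 1)).prod) (fund D) ⊆ Hle α (k : ℝ) := by
    have hmin := Nat.find_min hPex (m := j₀ - 1) (by omega)
    by_contra hc
    exact hmin ⟨by omega, hc⟩
  have hlt : j₀ - 1 < l.length := by omega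
  set sj := l.get ⟨j₀ - 1, hlt⟩ with hsjdef
  have hsj : sj ∈ SGen D := hl _ (hsjdef ▸ List.get_mem l _)
  have hstep : (l.take j₀).prod = (l.take (j₀ - 1)).prod * sj := by
    have h2 := List.prod_take_succ l (j₀ - 1) hlt
    rw [show j₀ - 1 + 1 = j₀ by omega] at h2
    rw [h2, hsjdef]
    rfl
  set x := (l.take (j₀ - 1)).prod with hx
  have hcur : actW (x * sj) (fund D) ⊆ Hge α (k : ℝ) := by
    rcases actW_fund_oneSide (x * sj) hα k with h | h
    · exact h
    · exfalso
      apply hj₀not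
      rw [hstep]
      exact h
  have hpin : ⇑(x : Equiv.Perm (V n)) ''
      (fund D ∩ {v : V n | (sj : Equiv.Perm (V n)) v = v}) ⊆ Hy α (k : ℝ) := by
    rintro a ⟨v, ⟨hvf, hvfix⟩, rfl⟩
    have h1 : (x : Equiv.Perm (V n)) v ∈ actW x (fund D) := ⟨v, hvf, rfl⟩
    have h2 : (x : Equiv.Perm (V n)) v ∈ actW (x * sj) (fund D) := by
      refine ⟨v, hvf, ?_⟩
      rw [Subgroup.coe_mul, Equiv.Perm.mul_apply, hvfix]
    rw [← Hge_inter_Hle]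
    exact ⟨hcur h2, hprev h1⟩
  have hconj := conj_eq_sRefl x sj hsj hα k hpin
  refine ⟨l.take (j₀ - 1) ++ l.drop j₀, ?_, ?_, ?_⟩
  · intro t ht
    rcases List.mem_append.mp ht with h | h
    · exact hl t (List.mem_of_mem_take h)
    · exact hl t (List.mem_of_mem_drop h)
  · rw [List.length_append, List.length_take, List.length_drop]
    omega
  · have hsplit : l.prod = (l.take j₀).prod * (l.drop j₀).prod := by
      rw [← List.prod_append, List.take_append_drop]
    have hss : sj * sj = 1 := sgen_sq hsj
    have hprod : (l.take (j₀ - 1) ++ l.drop j₀).prod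
        = (x * sj * x⁻¹) * l.prod := by
      rw [List.prod_append, hsplit, hstep, ← hx]
      have : x * sj * x⁻¹ * (x * sj * (l.drop j₀).prod)
          = x * (sj * sj) * (l.drop j₀).prod := by group
      rw [this, hss, mul_one]
    intro v
    rw [hprod, Subgroup.coe_mul, Equiv.Perm.mul_apply, hconj]

/-- The fundamental alcove and `y·fund` lie on the same side of the wall `H_{α,k}`
separating `y·fund` from `ys·fund`, thanks to `ℓ(ys) > ℓ(y)`. -/
lemma fund_sameSide_y {D : RootData n} (y s : AffW D) (hs : s ∈ SGen D)
    (hlen : lenW D y < lenW D (y * s))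
    {α : V n} (hα : α ∈ D.Φ) (k : ℤ)
    (hsep : Separates α (k : ℝ) (actW y (fund D)) (actW (y * s) (fund D))) :
    sameSide α (k : ℝ) (fund D) (actW y (fund D)) := by
  by_contra hc
  -- a word of minimal length for y exists
  have hWy : {m | ∃ l : List (AffW D), (∀ t ∈ l, t ∈ SGen D) ∧ l.length = m ∧
      l.prod = y}.Nonempty := by
    by_cases hWys : {m | ∃ l : List (AffW D), (∀ t ∈ l, t ∈ SGen D) ∧ l.length = m ∧
        l.prod = y * s}.Nonempty
    · obtain ⟨m', l', hl', hlen', hprod'⟩ := hWys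
      refine ⟨m' + 1, l' ++ [s], ?_, ?_, ?_⟩
      · intro t ht
        rcases List.mem_append.mp ht with h | h
        · exact hl' t h
        · rw [List.mem_singleton.mp h]; exact hs
      · rw [List.length_append, hlen']; rfl
      · rw [List.prod_append, List.prod_singleton, hprod', mul_assoc, sgen_sq hs,
          mul_one]
    · exfalso
      have h0 : lenW D (y * s) = 0 := by
        rw [lenW, Nat.sInf_eq_zero]
        right
        rwa [Set.not_nonempty_iff_eq_empty] at hWys
      rw [h0] at hlen
      omega
  have hmmem := Nat.sInf_mem hWy
  obtain ⟨l, hlS, hllen, hlprod⟩ := hmmem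
  have hysr := ys_eq_refl_y y s hs hα k hsep
  -- orientation analysis
  have hfund1 := fund_oneSide D hα k
  have hy1 := actW_fund_oneSide y hα k
  have hkey : ∃ l' : List (AffW D), (∀ t ∈ l', t ∈ SGen D) ∧
      l'.length + 1 = l.length ∧
      ∀ v, ((l'.prod : AffW D) : Equiv.Perm (V n)) v
        = sRefl α (k : ℝ) (((l.prod : AffW D) : Equiv.Perm (V n)) v) := by
    rcases hfund1 with hf | hf <;> rcases hy1 with hyg | hyl
    · exact absurd (Or.inl ⟨hf, hyg⟩) hc
    · -- fund ⊆ Hge, yF ⊆ Hle : use (-α, -k)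
      have hαneg : -α ∈ D.Φ := D.neg_mem α hα
      have hfund' : fund D ⊆ Hle (-α) ((-k : ℤ) : ℝ) := by
        push_cast
        rw [Hle_neg]
        exact hf
      have hy' : ¬ actW l.prod (fund D) ⊆ Hle (-α) ((-k : ℤ) : ℝ) := by
        push_cast
        rw [Hle_neg, hlprod]
        intro hsub
        exact actW_fund_not_Hy y hα k (subset_Hy_of_both hsub hyl)
      obtain ⟨l', h1, h2, h3⟩ := fold_word hαneg (-k) l hlS hfund' hy'
      refine ⟨l', h1, h2, fun v => ?_⟩
      rw [h3 v]
      have : sRefl (-α) ((-k : ℤ) : ℝ) = sRefl α (k : ℝ) := by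
        push_cast
        exact sRefl_neg α (k : ℝ)
      rw [this]
    · -- fund ⊆ Hle, yF ⊆ Hge
      have hy' : ¬ actW l.prod (fund D) ⊆ Hle α (k : ℝ) := by
        rw [hlprod]
        intro hsub
        exact actW_fund_not_Hy y hα k (subset_Hy_of_both hyg hsub)
      exact fold_word hα k l hlS hf hy'
    · exact absurd (Or.inr ⟨hf, hyl⟩) hc
  obtain ⟨l', hl'S, hl'len, hl'⟩ := hkey
  have hl'prod : l'.prod = y * s := by
    apply Subtype.ext
    apply Equiv.ext
    intro v
    rw [hl' v, hlprod, ← hysr v]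
  have hle' : lenW D (y * s) ≤ l'.length :=
    Nat.sInf_le ⟨l', hl'S, rfl, hl'prod⟩
  have : lenW D y = l.length := hllen.symm ▸ rfl
  omega

/-- The half-space opposite to `HalfId`. -/
def oppHalf (D : RootData n) (α : V n) (k : ℝ) : Set (V n) :=
  if fund D ⊆ Hge α k then Hle α k else Hge α k

lemma fund_subset_HalfId (D : RootData n) {α : V n} (hα : α ∈ D.Φ) (k : ℤ) :
    fund D ⊆ HalfId D α (k : ℝ) := by
  rw [HalfId]
  split_ifs with h
  · exact h
  · exact (fund_oneSide D hα k).resolve_left h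

lemma HalfId_inter_opp (D : RootData n) (α : V n) (k : ℝ) :
    HalfId D α k ∩ oppHalf D α k = Hy α k := by
  rw [HalfId, oppHalf]
  split_ifs with h
  · exact Hge_inter_Hle α k
  · rw [Set.inter_comm]; exact Hge_inter_Hle α k

/-- `y·fund` lies in `HalfId` and not in the opposite half-space. -/
lemma yfund_halfId {D : RootData n} (y s : AffW D) (hs : s ∈ SGen D)
    (hlen : lenW D y < lenW D (y * s))
    {α : V n} (hα : α ∈ D.Φ) (k : ℤ)
    (hsep : Separates α (k : ℝ) (actW y (fund D)) (actW (y * s) (fund D))) :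
    actW y (fund D) ⊆ HalfId D α (k : ℝ) ∧
      ¬ actW y (fund D) ⊆ oppHalf D α (k : ℝ) := by
  have hss := fund_sameSide_y y s hs hlen hα k hsep
  have hnotHy := actW_fund_not_Hy y hα k
  have hfnotHy := fund_not_subset_Hy D hα k
  rw [HalfId, oppHalf]
  rcases hss with ⟨hf, hy⟩ | ⟨hf, hy⟩
  · rw [if_pos hf, if_pos hf]
    exact ⟨hy, fun hc => hnotHy (subset_Hy_of_both hy hc)⟩
  · have hnf : ¬ fund D ⊆ Hge α (k : ℝ) := fun hc =>
      hfnotHy (subset_Hy_of_both hc hf)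
    rw [if_neg hnf, if_neg hnf]
    exact ⟨hy, fun hc => hnotHy (subset_Hy_of_both hc hy)⟩

end Aux
namespace Aux
variable {n : ℕ}

lemma sRefl_mem_Hge_iff {α : V n} (hα : α ≠ 0) (k : ℝ) (v : V n) :
    sRefl α k v ∈ Hge α k ↔ v ∈ Hle α k := by
  simp only [Hge, Hle, Set.mem_setOf_eq, inner_sRefl_self hα]
  constructor <;> intro h <;> linarith

lemma sRefl_mem_Hle_iff {α : V n} (hα : α ≠ 0) (k : ℝ) (v : V n) :
    sRefl α k v ∈ Hle α k ↔ v ∈ Hge α k := by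
  simp only [Hge, Hle, Set.mem_setOf_eq, inner_sRefl_self hα]
  constructor <;> intro h <;> linarith

/-- An alcove lies on one side of each hyperplane of the arrangement. -/
lemma alcove_oneSide {D : RootData n} {c : Set (V n)} (hc : IsAlcove D c)
    {β : V n} (hβ : β ∈ D.Φ) (m : ℤ) :
    c ⊆ Hge β (m : ℝ) ∨ c ⊆ Hle β (m : ℝ) := by
  obtain ⟨v, hv, rfl⟩ := hc
  have hcont : Continuous fun w : V n => ⟪β, w⟫ :=
    Continuous.inner continuous_const continuous_id
  set U : Set (V n) := {w | ⟪β, w⟫ < (m : ℝ)} with hU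
  set W : Set (V n) := {w | (m : ℝ) < ⟪β, w⟫} with hW
  have hUo : IsOpen U := isOpen_lt hcont continuous_const
  have hWo : IsOpen W := isOpen_lt continuous_const hcont
  have hdisj : Disjoint U W := by
    rw [Set.disjoint_left]
    intro a ha ha'
    simp only [hU, hW, Set.mem_setOf_eq] at ha ha'
    linarith
  have hsub : connectedComponentIn (wallUnion D)ᶜ v ⊆ U ∪ W := by
    intro a ha
    have h1 : a ∈ (wallUnion D)ᶜ := connectedComponentIn_subset _ _ ha
    have h2 : a ∉ Hy β (m : ℝ) := by
      intro h3
      apply h1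
      exact Set.mem_biUnion hβ (Set.mem_iUnion.mpr ⟨m, h3⟩)
    simp only [Hy, Set.mem_setOf_eq] at h2
    rcases lt_or_gt_of_ne h2 with h | h
    · exact Or.inl h
    · exact Or.inr h
  rcases (isPreconnected_connectedComponentIn).subset_or_subset hUo hWo hdisj hsub
    with h | h
  · right
    have hcl : IsClosed (Hle β (m : ℝ)) := isClosed_le hcont continuous_const
    apply closure_minimal _ hcl
    intro a ha
    have h2 := h ha
    simp only [hU, Set.mem_setOf_eq] at h2
    exact le_of_lt h2
  · left
    have hcl : IsClosed (Hge β (m : ℝ)) := isClosed_le continuous_const hcont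
    apply closure_minimal _ hcl
    intro a ha
    have h2 := h ha
    simp only [hW, Set.mem_setOf_eq] at h2
    exact le_of_lt h2

lemma alcove_not_subset_Hy {D : RootData n} {c : Set (V n)} (hc : IsAlcove D c)
    {β : V n} (hβ : β ∈ D.Φ) (m : ℤ) : ¬ c ⊆ Hy β (m : ℝ) := by
  obtain ⟨v, hv, rfl⟩ := hc
  intro hsub
  have hvc : v ∈ closure (connectedComponentIn (wallUnion D)ᶜ v) :=
    subset_closure (mem_connectedComponentIn hv)
  have := hsub hvc
  apply hv
  exact Set.mem_biUnion hβ (Set.mem_iUnion.mpr ⟨m, this⟩)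

lemma alcove_HalfId_dichotomy {D : RootData n} {c : Set (V n)} (hc : IsAlcove D c)
    {α : V n} (hα : α ∈ D.Φ) (k : ℤ) :
    c ⊆ HalfId D α (k : ℝ) ∨ c ⊆ oppHalf D α (k : ℝ) := by
  rw [HalfId, oppHalf]
  split_ifs
  · exact alcove_oneSide hc hα k
  · exact (alcove_oneSide hc hα k).symm

lemma not_both_halves {D : RootData n} {c : Set (V n)} (hc : IsAlcove D c)
    {α : V n} (hα : α ∈ D.Φ) (k : ℤ)
    (h1 : c ⊆ HalfId D α (k : ℝ)) (h2 : c ⊆ oppHalf D α (k : ℝ)) : False := by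
  apply alcove_not_subset_Hy hc hα k
  rw [← HalfId_inter_opp]
  exact Set.subset_inter h1 h2

/-- Function versions of the half-space transfer lemmas. -/
lemma image_subset_Hge_iff_fun {f : V n → V n} {β β' : V n} {m m' : ℝ}
    (hf : ∀ v, ⟪β, f v⟫ - m = ⟪β', v⟫ - m') (A : Set (V n)) :
    f '' A ⊆ Hge β m ↔ A ⊆ Hge β' m' := by
  rw [Set.image_subset_iff]
  constructor <;> intro h v hv <;> have h2 := h hv <;>
    simp only [Hge, Set.mem_preimage, Set.mem_setOf_eq] at h2 ⊢ <;>
    have hfv := hf v <;> linarith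

lemma image_subset_Hle_iff_fun {f : V n → V n} {β β' : V n} {m m' : ℝ}
    (hf : ∀ v, ⟪β, f v⟫ - m = ⟪β', v⟫ - m') (A : Set (V n)) :
    f '' A ⊆ Hle β m ↔ A ⊆ Hle β' m' := by
  rw [Set.image_subset_iff]
  constructor <;> intro h v hv <;> have h2 := h hv <;>
    simp only [Hle, Set.mem_preimage, Set.mem_setOf_eq] at h2 ⊢ <;>
    have hfv := hf v <;> linarith

lemma image_subset_Hy_iff_fun {f : V n → V n} {β β' : V n} {m m' : ℝ}
    (hf : ∀ v, ⟪β, f v⟫ - m = ⟪β', v⟫ - m') (A : Set (V n)) :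
    f '' A ⊆ Hy β m ↔ A ⊆ Hy β' m' := by
  rw [Set.image_subset_iff]
  constructor <;> intro h v hv <;> have h2 := h hv <;>
    simp only [Hy, Set.mem_preimage, Set.mem_setOf_eq] at h2 ⊢ <;>
    have hfv := hf v <;> linarith

/-- The pullback data for the reflection `s_{α,k}`. -/
lemma sRefl_Qp (D : RootData n) {α : V n} (hα : α ∈ D.Φ) (k : ℤ)
    {β : V n} (hβ : β ∈ D.Φ) (m : ℤ) :
    ∃ β' ∈ D.Φ, ∃ m' : ℤ, ∀ v,
      ⟪β, sRefl α (k : ℝ) v⟫ - (m : ℝ) = ⟪β', v⟫ - (m' : ℝ) := by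
  obtain ⟨t, ht⟩ := D.crystallographic α hα β hβ
  refine ⟨β - (2 * ⟪α, β⟫ / ⟪α, α⟫) • α, D.reflect_mem α hα β hβ, m - t * k, ?_⟩
  intro v
  rw [inner_sRefl, inner_sub_left, real_inner_smul_left, ht]
  push_cast
  ring

lemma image_sRefl_invol {α : V n} (hα : α ≠ 0) (k : ℝ) (A : Set (V n)) :
    sRefl α k '' (sRefl α k '' A) = A := by
  rw [← Set.image_comp]
  have : sRefl α k ∘ sRefl α k = id := funext fun v => sRefl_invol hα k v
  rw [this, Set.image_id]

lemma image_sRefl_of_subset_Hy {α : V n} {k : ℝ} {X : Set (V n)}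
    (hX : X ⊆ Hy α k) : sRefl α k '' X = X := by
  ext a
  constructor
  · rintro ⟨v, hv, rfl⟩
    rw [sRefl_fix (hX hv)]
    exact hv
  · intro ha
    exact ⟨a, ha, sRefl_fix (hX ha)⟩

lemma image_sRefl_HalfId {D : RootData n} {α : V n} (hα : α ≠ 0) (k : ℝ)
    {X : Set (V n)} (hX : X ⊆ HalfId D α k) :
    sRefl α k '' X ⊆ oppHalf D α k := by
  rw [HalfId, oppHalf] at *
  split_ifs at hX ⊢ <;>
  · rintro a ⟨v, hv, rfl⟩
    first
    | exact (sRefl_mem_Hle_iff hα k v).mpr (hX hv)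
    | exact (sRefl_mem_Hge_iff hα k v).mpr (hX hv)

/-- Panels of the gallery are contained in the neighbouring alcoves. -/
lemma gallery_panel_subs {D : RootData n} {γ : PreGallery n} (hγ : IsGallery D γ)
    {t : ℕ} (h1 : 1 ≤ t) (h2 : t ≤ γ.len) :
    γ.p t ⊆ γ.c (t - 1) ∧ γ.p t ⊆ γ.c t := by
  obtain ⟨hpan1, hpan2⟩ := hγ.2.2.2 t h1 h2
  constructor
  · obtain ⟨-, -, ⟨H, -, hpeq⟩, -⟩ := hpan1
    rw [hpeq]
    exact Set.inter_subset_left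
  · obtain ⟨-, -, ⟨H, -, hpeq⟩, -⟩ := hpan2
    rw [hpeq]
    exact Set.inter_subset_left

/-- The supporting hyperplane of a panel is unique. -/
lemma panel_unique_support {D : RootData n} {γ : PreGallery n} (hγ : IsGallery D γ)
    {t : ℕ} (h1 : 1 ≤ t) (h2 : t ≤ γ.len)
    {β : V n} (hβ : β ∈ D.Φ) (m : ℤ) (hpm : γ.p t ⊆ Hy β (m : ℝ))
    {α : V n} (hα : α ∈ D.Φ) (k : ℤ) (hpk : γ.p t ⊆ Hy α (k : ℝ)) :
    Hy β (m : ℝ) = Hy α (k : ℝ) := by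
  obtain ⟨-, -, -, H, ⟨hHmem, hHsub⟩, huniq⟩ := (hγ.2.2.2 t h1 h2).2
  have e1 : Hy β (m : ℝ) = H := huniq _ ⟨⟨β, hβ, m, rfl⟩, hpm⟩
  have e2 : Hy α (k : ℝ) = H := huniq _ ⟨⟨α, hα, k, rfl⟩, hpk⟩
  rw [e1, e2]

end Aux
namespace Aux
variable {n : ℕ}

lemma Hy_neg (α : V n) (k : ℝ) : Hy (-α) (-k) = Hy α k := by
  ext v
  simp only [Hy, Set.mem_setOf_eq, inner_neg_left]
  constructor <;> intro h <;> linarith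

lemma subset_HalfId_of_sameSide {D : RootData n} {α : V n} {k : ℝ} {X Y : Set (V n)}
    (hss : sameSide α k X Y) (hY : Y ⊆ HalfId D α k) (hY' : ¬ Y ⊆ oppHalf D α k) :
    X ⊆ HalfId D α k := by
  rw [HalfId, oppHalf] at *
  split_ifs at hY hY' ⊢ with h
  · rcases hss with ⟨h1, h2⟩ | ⟨h1, h2⟩
    · exact h1
    · exact absurd h2 hY'
  · rcases hss with ⟨h1, h2⟩ | ⟨h1, h2⟩
    · exact absurd h2 hY'
    · exact h1

lemma not_sameSide_of_opp {D : RootData n} {α : V n} {k : ℝ} {X Y : Set (V n)}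
    (hX : X ⊆ oppHalf D α k) (hX' : ¬ X ⊆ HalfId D α k)
    (hY : Y ⊆ HalfId D α k) (hY' : ¬ Y ⊆ oppHalf D α k) :
    ¬ sameSide α k X Y := by
  rw [HalfId, oppHalf] at *
  split_ifs at hX hX' hY hY' ⊢ with h
  · rintro (⟨h1, h2⟩ | ⟨h1, h2⟩)
    · exact hX' h1
    · exact hY' h2
  · rintro (⟨h1, h2⟩ | ⟨h1, h2⟩)
    · exact hY' h2
    · exact hX' h1

/-- At the start of an indentation (an index in `L` whose predecessor is not), the
panel lies in `H` and the alcove is in the `id`-half-space. -/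
lemma mem_maxIngrowth_start {D : RootData n} {γ : PreGallery n} {α : V n} {k : ℝ}
    {i : ℕ} (hiL : i ∈ maxIngrowth D γ α k) (hprev : i - 1 ∉ maxIngrowth D γ α k)
    (hi1 : 1 ≤ i) :
    γ.p i ⊆ Hy α k ∧ (i ≤ γ.len → γ.c i ⊆ HalfId D α k) := by
  rcases hiL with ⟨j, m', hind, hji, him⟩ | ⟨j, hind, hji⟩
  · have hj : j = i := by
      by_contra hne
      have hji' : j ≤ i - 1 := by omega
      exact hprev (Or.inl ⟨j, m', hind, hji', by omega⟩)
    obtain ⟨h1j, hjm, hmle, hpj, hpm, hcall⟩ := hind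
    exact ⟨hj ▸ hpj, fun _ => hcall i (by omega) him⟩
  · have hj : j = i := by
      by_contra hne
      have hji' : j ≤ i - 1 := by omega
      exact hprev (Or.inr ⟨j, hind, hji'⟩)
    obtain ⟨h1j, hjle, hpj, hcall⟩ := hind
    exact ⟨hj ▸ hpj, fun hlen => hcall i (by omega) hlen⟩

/-- At the end of an indentation (an index not in `L` whose predecessor is), the panel
lies in `H` and the previous alcove is in the `id`-half-space. -/
lemma mem_maxIngrowth_end {D : RootData n} {γ : PreGallery n} {α : V n} {k : ℝ}
    {i : ℕ} (hprevL : i - 1 ∈ maxIngrowth D γ α k) (hiN : i ∉ maxIngrowth D γ α k)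
    (hi1 : 1 ≤ i) :
    γ.p i ⊆ Hy α k ∧ γ.c (i - 1) ⊆ HalfId D α k := by
  rcases hprevL with ⟨j, m', hind, hji, him⟩ | ⟨j, hind, hji⟩
  · have hmi : m' = i := by
      by_contra hne
      have : i < m' := by omega
      exact hiN (Or.inl ⟨j, m', hind, by omega, this⟩)
    obtain ⟨h1j, hjm, hmle, hpj, hpm, hcall⟩ := hind
    exact ⟨hmi ▸ hpm, hcall (i - 1) hji him⟩
  · exact absurd (Or.inr ⟨j, hind, by omega⟩) hiN

/-- An alcove of the gallery in the `id`-half-space whose incoming panel lies in `H`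
starts an indentation. -/
lemma mem_maxIngrowth_of_start {D : RootData n} {γ : PreGallery n}
    (hγ : IsGallery D γ) {α : V n} (hα : α ∈ D.Φ) (k : ℤ)
    {i : ℕ} (h1 : 1 ≤ i) (hil : i ≤ γ.len)
    (hp : γ.p i ⊆ Hy α (k : ℝ)) (hc : γ.c i ⊆ HalfId D α (k : ℝ)) :
    i ∈ maxIngrowth D γ α (k : ℝ) := by
  classical
  by_cases hex : ∃ m', (i < m' ∧ m' ≤ γ.len) ∧ ¬ γ.c m' ⊆ HalfId D α (k : ℝ)
  · obtain ⟨m₀, hm₀def⟩ : ∃ m₀, m₀ = Nat.find hex := ⟨_, rfl⟩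
    have hspec := Nat.find_spec hex
    rw [← hm₀def] at hspec
    obtain ⟨⟨him₀, hm₀len⟩, hm₀not⟩ := hspec
    have hball : ∀ t, i ≤ t → t < m₀ → γ.c t ⊆ HalfId D α (k : ℝ) := by
      intro t hit htm
      rcases eq_or_lt_of_le hit with h | h
      · rw [← h]; exact hc
      · by_contra hcon
        exact Nat.find_min hex (m := t) (hm₀def ▸ htm) ⟨⟨h, by omega⟩, hcon⟩
    have hcm₀ : γ.c m₀ ⊆ oppHalf D α (k : ℝ) :=
      (alcove_HalfId_dichotomy (hγ.1 m₀ hm₀len) hα k).resolve_left hm₀not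
    have hsubs := gallery_panel_subs hγ (t := m₀) (by omega) hm₀len
    have hpm₀ : γ.p m₀ ⊆ Hy α (k : ℝ) := by
      rw [← HalfId_inter_opp]
      intro v hv
      exact ⟨hball (m₀ - 1) (by omega) (by omega) (hsubs.1 hv), hcm₀ (hsubs.2 hv)⟩
    exact Or.inl ⟨i, m₀, ⟨h1, him₀, by omega, hp, hpm₀, hball⟩, le_rfl, him₀⟩
  · push_neg at hex
    refine Or.inr ⟨i, ⟨h1, by omega, hp, ?_⟩, le_rfl⟩
    intro t hit htlen
    rcases eq_or_lt_of_le hit with h | h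
    · rw [← h]; exact hc
    · exact hex t ⟨h, htlen⟩

/-- `ys·fund` is the reflection of `y·fund`. -/
lemma actW_ys_eq_image {D : RootData n} (y s : AffW D) (hs : s ∈ SGen D)
    {α : V n} (hα : α ∈ D.Φ) (k : ℤ)
    (hsep : Separates α (k : ℝ) (actW y (fund D)) (actW (y * s) (fund D))) :
    actW (y * s) (fund D) = sRefl α (k : ℝ) '' actW y (fund D) := by
  have h := ys_eq_refl_y y s hs hα k hsep
  rw [actW, actW, ← Set.image_comp]
  apply Set.image_congr'
  intro v
  exact (h v).symm ▸ rfl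

end Aux
open Aux in
/-- Lemma: the unfolding operator `f_H^L`, for `L` the maximal `H`-ingrowth,
sends galleries positively folded with respect to `φ_{𝐲𝐬}` to galleries positively folded
with respect to `φ_𝐲`. -/
theorem f_maxIngrowth_positivelyFolded {n : ℕ} (D : RootData n)
    (y s : AffW D) (hs : s ∈ SGen D) (hlen : lenW D y < lenW D (y * s))
    (α : V n) (hα : α ∈ D.Φ) (k : ℤ)
    (hsep : Separates α (k : ℝ) (actW y (fund D)) (actW (y * s) (fund D)))
    (γ : PreGallery n) (hγ : IsGallery D γ)
    (hpos : PositivelyFolded (alcoveOrient D (actW (y * s) (fund D))) γ) :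
    PositivelyFolded (alcoveOrient D (actW y (fund D)))
      (flipGallery α (k : ℝ) (maxIngrowth D γ α (k : ℝ)) γ) := by
  classical
  have hα0 : α ≠ 0 := D.nonzero α hα
  set L := maxIngrowth D γ α (k : ℝ) with hLdef
  set r := sRefl α (k : ℝ) with hrdef
  have hY := yfund_halfId y s hs hlen hα k hsep
  have hysF := actW_ys_eq_image y s hs hα k hsep
  intro i hi1 hilen hfold
  have hilen' : i ≤ γ.len := hilen
  have hcdef : ∀ t, (flipGallery α (k : ℝ) L γ).c t
      = if t ∈ L then r '' γ.c t else γ.c t := fun t => rfl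
  have hpdef : ∀ t, (flipGallery α (k : ℝ) L γ).p t
      = if t ∈ L then r '' γ.p t else γ.p t := fun t => rfl
  intro β hβ m hpβ
  rw [hpdef i] at hpβ
  rw [hcdef i]
  rw [hcdef (i - 1), hcdef i] at hfold
  by_cases hiL : i ∈ L <;> by_cases hprevL : i - 1 ∈ L
  · -- Case D : both flipped
    rw [if_pos hiL, if_pos hprevL] at hfold
    rw [if_pos hiL] at hpβ ⊢
    have hfold' : γ.c (i - 1) = γ.c i := by
      have h2 := congrArg (Set.image r) hfold
      rwa [hrdef, image_sRefl_invol hα0, image_sRefl_invol hα0] at h2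
    obtain ⟨β', hβ', m', hf⟩ := sRefl_Qp D hα k hβ m
    have hp' : γ.p i ⊆ Hy β' (m' : ℝ) :=
      (image_subset_Hy_iff_fun hf _).mp (by rwa [hrdef] at hpβ)
    have hOr := hpos i hi1 hilen' hfold' β' hβ' m' hp'
    intro hss
    apply hOr
    have hyF_eq : actW y (fund D) = r '' actW (y * s) (fund D) := by
      rw [hysF, hrdef, image_sRefl_invol hα0]
    rcases hss with ⟨h1, h2⟩ | ⟨h1, h2⟩
    · exact Or.inl ⟨(image_subset_Hge_iff_fun hf _).mp (by rwa [hrdef] at h1),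
        (image_subset_Hge_iff_fun hf _).mp (by rw [hyF_eq, hrdef] at h2; exact h2)⟩
    · exact Or.inr ⟨(image_subset_Hle_iff_fun hf _).mp (by rwa [hrdef] at h1),
        (image_subset_Hle_iff_fun hf _).mp (by rw [hyF_eq, hrdef] at h2; exact h2)⟩
  · -- Case B : start of an indentation
    rw [if_pos hiL] at hpβ ⊢
    obtain ⟨hpH, hcHalf'⟩ := mem_maxIngrowth_start hiL hprevL hi1
    have hcHalf := hcHalf' hilen'
    have hpeq : r '' γ.p i = γ.p i := by
      rw [hrdef]
      exact image_sRefl_of_subset_Hy hpH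
    rw [hpeq] at hpβ
    have hH : Hy β (m : ℝ) = Hy α (k : ℝ) :=
      panel_unique_support hγ hi1 hilen' hβ m hpβ hα k hpH
    intro hss
    rw [sameSide_of_Hy_eq (D.nonzero β hβ) hα0 hH] at hss
    have hXopp : r '' γ.c i ⊆ oppHalf D α (k : ℝ) := by
      rw [hrdef]
      exact image_sRefl_HalfId hα0 _ hcHalf
    have hXnot : ¬ r '' γ.c i ⊆ HalfId D α (k : ℝ) := by
      intro hcon
      have hboth : r '' γ.c i ⊆ Hy α (k : ℝ) := by
        rw [← HalfId_inter_opp]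
        exact Set.subset_inter hcon hXopp
      have hf2 : ∀ v, ⟪α, r v⟫ - (k : ℝ) = ⟪-α, v⟫ - (((-k : ℤ)) : ℝ) := by
        intro v
        rw [hrdef, inner_sRefl_self hα0, inner_neg_left]
        push_cast
        ring
      have h3 := (image_subset_Hy_iff_fun hf2 _).mp hboth
      rw [show (((-k : ℤ)) : ℝ) = -(k : ℝ) by push_cast; ring, Hy_neg] at h3
      exact alcove_not_subset_Hy (hγ.1 i hilen') hα k h3
    exact not_sameSide_of_opp hXopp hXnot hY.1 hY.2 hss
  · -- Case C : end of an indentation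
    rw [if_neg hiL] at hpβ ⊢
    rw [if_pos hprevL, if_neg hiL] at hfold
    obtain ⟨hpH, hcprev⟩ := mem_maxIngrowth_end hprevL hiL hi1
    have hH : Hy β (m : ℝ) = Hy α (k : ℝ) :=
      panel_unique_support hγ hi1 hilen' hβ m hpβ hα k hpH
    have hciopp : γ.c i ⊆ oppHalf D α (k : ℝ) := by
      rw [← hfold, hrdef]
      exact image_sRefl_HalfId hα0 _ hcprev
    have hcinot : ¬ γ.c i ⊆ HalfId D α (k : ℝ) := fun hcon =>
      not_both_halves (hγ.1 i hilen') hα k hcon hciopp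
    intro hss
    rw [sameSide_of_Hy_eq (D.nonzero β hβ) hα0 hH] at hss
    exact not_sameSide_of_opp hciopp hcinot hY.1 hY.2 hss
  · -- Case A : away from the ingrowth
    rw [if_neg hiL] at hpβ ⊢
    rw [if_neg hiL, if_neg hprevL] at hfold
    have hOr := hpos i hi1 hilen' hfold
    by_cases hH : Hy β (m : ℝ) = Hy α (k : ℝ)
    · intro hss
      rw [sameSide_of_Hy_eq (D.nonzero β hβ) hα0 hH] at hss
      have hcHalf : γ.c i ⊆ HalfId D α (k : ℝ) :=
        subset_HalfId_of_sameSide hss hY.1 hY.2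
      have hpH : γ.p i ⊆ Hy α (k : ℝ) := by
        rw [← hH]
        exact hpβ
      exact hiL (mem_maxIngrowth_of_start hγ hα k hi1 hilen' hpH hcHalf)
    · intro hss
      apply hOr β hβ m hpβ
      have hS := sameSide_y_ys y s hs hα k hsep hβ m hH
      have hnotHy := actW_fund_not_Hy y hβ m
      rcases hss with ⟨h1, h2⟩ | ⟨h1, h2⟩ <;> rcases hS with ⟨h3, h4⟩ | ⟨h3, h4⟩
      · exact Or.inl ⟨h1, h4⟩
      · exact absurd (subset_Hy_of_both h2 h3) hnotHy
      · exact absurd (subset_Hy_of_both h3 h2) hnotHy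
      · exact Or.inr ⟨h1, h4⟩
end
end

section
/- For every J ⊆ {1,…,n}, every y ∈ W, and every collection of integers {n_β : β ∈ Φ⁺ ∖ Φ_J⁺}, the (J,y)-sector S_{J,y}({n_β}) contains at least one alcove; moreover, if it contains more than one alcove, then it contains infinitely many alcoves. -/
open scoped RealInnerProductSpace
open scoped Classical

section AuxProof

variable {n : ℕ}

lemma inner_cont (α : V n) : Continuous fun v : V n => (⟪α, v⟫ : ℝ) :=
  continuous_const.inner continuous_id

lemma inner_self_ne (D : RootData n) {α : V n} (hα : α ∈ D.Φ) : ⟪α, α⟫ ≠ 0 := by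
  intro h
  exact D.nonzero α hα (inner_self_eq_zero.mp h)

lemma inner_sRefl (α : V n) (k : ℝ) (β v : V n) :
    ⟪β, sRefl α k v⟫ = ⟪β, v⟫ - (⟪α, v⟫ - k) * ((2 / ⟪α, α⟫) * ⟪β, α⟫) := by
  unfold sRefl coroot
  rw [inner_sub_right, real_inner_smul_right, real_inner_smul_right]

lemma inner_sRefl_self {α : V n} (hα : ⟪α, α⟫ ≠ 0) (k : ℝ) (v : V n) :
    ⟪α, sRefl α k v⟫ = 2 * k - ⟪α, v⟫ := by
  rw [inner_sRefl, real_inner_comm α α]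
  rw [div_mul_cancel₀ 2 hα]
  ring

lemma sRefl_invol {α : V n} (hα : ⟪α, α⟫ ≠ 0) (k : ℝ) (v : V n) :
    sRefl α k (sRefl α k v) = v := by
  have h2 : ⟪α, sRefl α k v⟫ = 2 * k - ⟪α, v⟫ := inner_sRefl_self hα k v
  show sRefl α k v - (⟪α, sRefl α k v⟫ - k) • coroot α = v
  rw [h2]
  show (v - (⟪α, v⟫ - k) • coroot α) - (2 * k - ⟪α, v⟫ - k) • coroot α = v
  module

lemma sRefl_cont (α : V n) (k : ℝ) : Continuous (sRefl α k : V n → V n) := by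
  unfold sRefl
  exact continuous_id.sub (((inner_cont α).sub continuous_const).smul continuous_const)

lemma mem_wallUnion_iff (D : RootData n) (v : V n) :
    v ∈ wallUnion D ↔ ∃ α ∈ D.Φ, ∃ m : ℤ, ⟪α, v⟫ = (m : ℝ) := by
  simp [wallUnion, Hy]

lemma sRefl_wall (D : RootData n) {α : V n} (hα : α ∈ D.Φ) (k : ℤ) {v : V n}
    (hv : v ∈ wallUnion D) : sRefl α (k : ℝ) v ∈ wallUnion D := by
  rw [mem_wallUnion_iff] at hv ⊢
  obtain ⟨β, hβ, m, hm⟩ := hv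
  obtain ⟨t, ht⟩ := D.crystallographic α hα β hβ
  have ha : ⟪α, α⟫ ≠ 0 := inner_self_ne D hα
  refine ⟨β - (2 * ⟪α, β⟫ / ⟪α, α⟫) • α, D.reflect_mem α hα β hβ, m - t * k, ?_⟩
  rw [inner_sub_left, real_inner_smul_left, inner_sRefl, inner_sRefl_self ha, hm,
    real_inner_comm β α]
  push_cast
  linear_combination (-(k : ℝ)) * ht + (2 * (k : ℝ) / ⟪α, α⟫) * real_inner_comm β α

/-- Elements of the affine Weyl group are continuous (with continuous inverse) and
preserve the union of walls. -/
lemma good_of_mem (D : RootData n) {g : Equiv.Perm (V n)} (hg : g ∈ AffW D) :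
    Continuous ⇑g ∧ Continuous ⇑g⁻¹ ∧ ∀ v, g v ∈ wallUnion D ↔ v ∈ wallUnion D := by
  induction hg using Subgroup.closure_induction with
  | mem e he =>
    obtain ⟨α, hα, k, hk⟩ := he
    have ha : ⟪α, α⟫ ≠ 0 := inner_self_ne D hα
    have hinvol : ∀ v, e (e v) = v := by
      intro v
      rw [show e v = sRefl α (k : ℝ) v from congrFun hk v,
        show ∀ w, e w = sRefl α (k : ℝ) w from congrFun hk]
      exact sRefl_invol ha _ _
    have hee : e * e = 1 := Equiv.ext fun v => hinvol v
    have hinv : e⁻¹ = e := inv_eq_of_mul_eq_one_right hee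
    have hcont : Continuous ⇑e := by rw [hk]; exact sRefl_cont _ _
    have hF : ∀ v ∈ wallUnion D, e v ∈ wallUnion D := by
      intro v hv
      rw [congrFun hk v]
      exact sRefl_wall D hα k hv
    refine ⟨hcont, by rwa [hinv], fun v => ⟨fun h => ?_, hF v⟩⟩
    have := hF (e v) h
    rwa [hinvol v] at this
  | one => exact ⟨by simpa using continuous_id, by simpa using continuous_id, by simp⟩
  | mul a b ha hb iha ihb =>
    refine ⟨?_, ?_, fun v => ?_⟩
    · rw [show ⇑(a * b) = ⇑a ∘ ⇑b from rfl]; exact iha.1.comp ihb.1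
    · rw [mul_inv_rev, show ⇑(b⁻¹ * a⁻¹) = ⇑b⁻¹ ∘ ⇑a⁻¹ from rfl]
      exact ihb.2.1.comp iha.2.1
    · rw [show (a * b) v = a (b v) from rfl, iha.2.2, ihb.2.2]
  | inv a ha iha =>
    refine ⟨iha.2.1, by rw [inv_inv]; exact iha.1, fun v => ?_⟩
    have := (iha.2.2 (a⁻¹ v)).symm
    rwa [show a (a⁻¹ v) = v from a.apply_symm_apply v] at this

/-- The homeomorphism associated to an element of the affine Weyl group. -/
noncomputable def homeoOf (D : RootData n) (g : Equiv.Perm (V n)) (hg : g ∈ AffW D) : V n ≃ₜ V n :=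
  { toEquiv := g
    continuous_toFun := (good_of_mem D hg).1
    continuous_invFun := (good_of_mem D hg).2.1 }

lemma image_wall_compl (D : RootData n) {g : Equiv.Perm (V n)} (hg : g ∈ AffW D) :
    ⇑g '' (wallUnion D)ᶜ = (wallUnion D)ᶜ := by
  obtain ⟨-, -, hiff⟩ := good_of_mem D hg
  ext x
  constructor
  · rintro ⟨v, hv, rfl⟩
    exact fun h => hv ((hiff v).mp h)
  · intro hx
    refine ⟨g⁻¹ x, fun h => hx ?_, g.apply_symm_apply x⟩
    have := (hiff (g⁻¹ x)).mpr h
    rwa [show g (g⁻¹ x) = x from g.apply_symm_apply x] at this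

lemma alcove_image (D : RootData n) {g : Equiv.Perm (V n)} (hg : g ∈ AffW D)
    {c : Set (V n)} (hc : IsAlcove D c) : IsAlcove D (⇑g '' c) := by
  obtain ⟨v, hv, rfl⟩ := hc
  refine ⟨g v, ?_, ?_⟩
  · rw [← image_wall_compl D hg]
    exact Set.mem_image_of_mem _ hv
  · rw [show ⇑g = ⇑(homeoOf D g hg) from rfl,
      (homeoOf D g hg).image_closure,
      Homeomorph.image_connectedComponentIn _ hv,
      show ⇑(homeoOf D g hg) '' (wallUnion D)ᶜ = (wallUnion D)ᶜ from image_wall_compl D hg]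

lemma Hy_subset_wall (D : RootData n) {α : V n} (hα : α ∈ D.Φ) (m : ℤ) :
    Hy α (m : ℝ) ⊆ wallUnion D := by
  intro v hv
  exact (mem_wallUnion_iff D v).mpr ⟨α, hα, m, hv⟩

lemma comp_not_wall (D : RootData n) (u : V n) {α : V n} (hα : α ∈ D.Φ) (m : ℤ) :
    connectedComponentIn (wallUnion D)ᶜ u ⊆ {v | ⟪α, v⟫ < (m : ℝ)} ∪ {v | (m : ℝ) < ⟪α, v⟫} := by
  intro v hv
  have : v ∉ wallUnion D := connectedComponentIn_subset _ _ hv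
  have hne : ⟪α, v⟫ ≠ (m : ℝ) := fun h => this (Hy_subset_wall D hα m h)
  rcases lt_or_gt_of_ne hne with h | h
  · exact Or.inl h
  · exact Or.inr h

lemma comp_side (D : RootData n) {u : V n} (hu : u ∉ wallUnion D) {α : V n} (hα : α ∈ D.Φ)
    (m : ℤ) :
    (⟪α, u⟫ < (m : ℝ) → connectedComponentIn (wallUnion D)ᶜ u ⊆ {v | ⟪α, v⟫ < (m : ℝ)}) ∧
    ((m : ℝ) < ⟪α, u⟫ → connectedComponentIn (wallUnion D)ᶜ u ⊆ {v | (m : ℝ) < ⟪α, v⟫}) := by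
  have hmem : u ∈ connectedComponentIn (wallUnion D)ᶜ u := mem_connectedComponentIn hu
  have ho1 : IsOpen {v : V n | ⟪α, v⟫ < (m : ℝ)} :=
    isOpen_lt (inner_cont α) continuous_const
  have ho2 : IsOpen {v : V n | (m : ℝ) < ⟪α, v⟫} :=
    isOpen_lt continuous_const (inner_cont α)
  have hor := (isPreconnected_connectedComponentIn).subset_or_subset ho1 ho2
    (by
      rw [Set.disjoint_left]
      intro v h1 h2
      simp only [Set.mem_setOf_eq] at h1 h2
      linarith)
    (comp_not_wall D u hα m)
  constructor
  · intro hlt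
    rcases hor with h | h
    · exact h
    · have := h hmem
      simp only [Set.mem_setOf_eq] at this
      linarith
  · intro hgt
    rcases hor with h | h
    · have := h hmem
      simp only [Set.mem_setOf_eq] at this
      linarith
    · exact h

lemma closure_comp_le (D : RootData n) {u : V n} (hu : u ∉ wallUnion D) {α : V n}
    (hα : α ∈ D.Φ) {m : ℤ} (h : ⟪α, u⟫ < (m : ℝ)) :
    closure (connectedComponentIn (wallUnion D)ᶜ u) ⊆ Hle α (m : ℝ) := by
  have hcl : IsClosed (Hle α (m : ℝ)) := by
    unfold Hle
    exact isClosed_le (inner_cont α) (continuous_const : Continuous fun _ : V n => (m : ℝ))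
  refine closure_minimal (fun v hv => ?_) hcl
  show ⟪α, v⟫ ≤ (m : ℝ)
  exact le_of_lt ((comp_side D hu hα m).1 h hv)

lemma closure_comp_ge (D : RootData n) {u : V n} (hu : u ∉ wallUnion D) {α : V n}
    (hα : α ∈ D.Φ) {m : ℤ} (h : (m : ℝ) < ⟪α, u⟫) :
    closure (connectedComponentIn (wallUnion D)ᶜ u) ⊆ Hge α (m : ℝ) := by
  have hcl : IsClosed (Hge α (m : ℝ)) := by
    unfold Hge
    exact isClosed_le (continuous_const : Continuous fun _ : V n => (m : ℝ)) (inner_cont α)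
  refine closure_minimal (fun v hv => ?_) hcl
  show (m : ℝ) ≤ ⟪α, v⟫
  exact le_of_lt ((comp_side D hu hα m).2 h hv)

lemma span_simple_top (D : RootData n) : Submodule.span ℝ (Set.range D.simple) = ⊤ := by
  rw [← top_le_iff, ← D.span_top]
  refine Submodule.span_le.mpr fun α hα => ?_
  rcases D.pos_total α hα with hp | hp
  · obtain ⟨c, hc0, hceq⟩ := D.pos_combo α hp
    rw [hceq]
    exact Submodule.sum_mem _ fun i _ =>
      Submodule.smul_mem _ _ (Submodule.subset_span ⟨i, rfl⟩)
  · obtain ⟨c, hc0, hceq⟩ := D.pos_combo (-α) hp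
    have : -α ∈ Submodule.span ℝ (Set.range D.simple) := by
      rw [hceq]
      exact Submodule.sum_mem _ fun i _ =>
        Submodule.smul_mem _ _ (Submodule.subset_span ⟨i, rfl⟩)
    simpa using Submodule.neg_mem _ this

lemma eq_zero_of_inner_simple (D : RootData n) {v : V n}
    (h : ∀ j, ⟪D.simple j, v⟫ = 0) : v = 0 := by
  have hker : Submodule.span ℝ (Set.range D.simple) ≤
      LinearMap.ker ((innerSL ℝ v).toLinearMap) := by
    refine Submodule.span_le.mpr ?_
    rintro w ⟨j, rfl⟩
    simp only [Set.mem_setOf_eq, SetLike.mem_coe, LinearMap.mem_ker,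
      ContinuousLinearMap.coe_coe, innerSL_apply_apply]
    rw [real_inner_comm]
    exact h j
  rw [span_simple_top D, top_le_iff] at hker
  have hvmem : v ∈ LinearMap.ker ((innerSL ℝ v).toLinearMap) := by
    rw [hker]; exact Submodule.mem_top
  have hv : ⟪v, v⟫ = (0 : ℝ) := by simpa using hvmem
  exact inner_self_eq_zero.mp hv

/-- Dual vectors to the simple roots. -/
lemma exists_dual (D : RootData n) :
    ∃ ω : Fin n → V n, ∀ i j, ⟪D.simple i, ω j⟫ = if i = j then 1 else 0 := by
  let G : V n →ₗ[ℝ] (Fin n → ℝ) := LinearMap.pi fun j => ((innerSL ℝ (D.simple j)).toLinearMap)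
  have hinj : Function.Injective G := by
    rw [← LinearMap.ker_eq_bot, LinearMap.ker_eq_bot']
    intro v hv
    refine eq_zero_of_inner_simple D fun j => ?_
    have := congrFun (congrArg (fun f => (f : Fin n → ℝ)) hv) j
    simpa [G] using this
  have hfr : Module.finrank ℝ (V n) = Module.finrank ℝ (Fin n → ℝ) := by
    simp [finrank_euclideanSpace_fin]
  let e := LinearMap.linearEquivOfInjective G hinj hfr
  refine ⟨fun j => e.symm (Pi.single j (1 : ℝ)), fun i j => ?_⟩
  have h1 : G (e.symm (Pi.single j (1 : ℝ))) = Pi.single j (1 : ℝ) := by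
    rw [← LinearMap.linearEquivOfInjective_apply (f := G) hinj hfr]
    exact e.apply_symm_apply _
  have hGi : ⟪D.simple i, e.symm (Pi.single j (1 : ℝ))⟫ = (Pi.single j (1 : ℝ) : Fin n → ℝ) i := by
    have h2 := congrFun h1 i
    simpa [G] using h2
  rw [hGi, Pi.single_apply]

lemma inner_combo (D : RootData n) {ω : Fin n → V n}
    (hω : ∀ i j, ⟪D.simple i, ω j⟫ = if i = j then (1 : ℝ) else 0)
    (c : Fin n → ℝ) (j : Fin n) :
    ⟪∑ i, c i • D.simple i, ω j⟫ = c j := by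
  rw [sum_inner]
  simp only [real_inner_smul_left, hω, mul_ite, mul_one, mul_zero]
  simp

/-- Choice of a parameter avoiding all walls along a line. -/
lemma exists_good_s (D : RootData n) (x₀ ν : V n)
    (hx₀ : ∀ α ∈ D.Φ, ⟪α, ν⟫ = 0 → ∀ m : ℤ, ⟪α, x₀⟫ ≠ (m : ℝ))
    {a b : ℝ} (hab : a < b) :
    ∃ s ∈ Set.Ioo a b, ∀ α ∈ D.Φ, ∀ m : ℤ, ⟪α, x₀⟫ + s * ⟪α, ν⟫ ≠ (m : ℝ) := by
  set bad := {s : ℝ | ∃ α ∈ D.Φ, ∃ m : ℤ, ⟪α, x₀⟫ + s * ⟪α, ν⟫ = (m : ℝ)} with hbaddef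
  have hbad : bad.Countable := by
    have hsub : bad ⊆ ⋃ α ∈ D.Φ, ⋃ m : ℤ, {s : ℝ | ⟪α, x₀⟫ + s * ⟪α, ν⟫ = (m : ℝ)} := by
      rintro s ⟨α, hα, m, hm⟩
      exact Set.mem_biUnion hα (Set.mem_iUnion.mpr ⟨m, hm⟩)
    refine Set.Countable.mono hsub ?_
    refine Set.Countable.biUnion D.finite.countable fun α hα =>
      Set.countable_iUnion fun m => ?_
    by_cases hν : ⟪α, ν⟫ = 0
    · have : {s : ℝ | ⟪α, x₀⟫ + s * ⟪α, ν⟫ = (m : ℝ)} = ∅ := by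
        ext s
        simp only [Set.mem_setOf_eq, Set.mem_empty_iff_false, iff_false]
        intro h
        rw [hν, mul_zero, add_zero] at h
        exact hx₀ α hα hν m h
      rw [this]
      exact Set.countable_empty
    · refine Set.Subsingleton.countable fun s hs s' hs' => ?_
      simp only [Set.mem_setOf_eq] at hs hs'
      have : s * ⟪α, ν⟫ = s' * ⟪α, ν⟫ := by linarith
      exact mul_right_cancel₀ hν this
  have hns : ¬ (Set.Ioo a b ⊆ bad) := by
    intro hsub
    have hcnt : (Set.Ioo a b).Countable := hbad.mono hsub
    have hcard : Cardinal.mk (Set.Ioo a b) = Cardinal.continuum := Cardinal.mk_Ioo_real hab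
    have : Cardinal.mk (Set.Ioo a b) ≤ Cardinal.aleph0 :=
      Cardinal.mk_le_aleph0_iff.mpr (Set.countable_coe_iff.mpr hcnt)
    rw [hcard] at this
    exact absurd this (not_le.mpr Cardinal.aleph0_lt_continuum)
  obtain ⟨s, hsIoo, hsbad⟩ := Set.not_subset.mp hns
  exact ⟨s, hsIoo, fun α hα m h => hsbad ⟨α, hα, m, h⟩⟩

lemma halfFor_one (D : RootData n) {α : V n} (hα : α ∈ D.pos) (k : ℝ) :
    halfFor D α k 1 = Hge α k := by
  unfold halfFor
  rw [if_pos]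
  intro v hv
  simpa using hv α hα

lemma halfFor_w0 (D : RootData n) {w0 : Equiv.Perm (V n)} (hw0 : IsLongest D w0)
    {β : V n} (hβ : β ∈ D.pos) (k : ℝ) {om : V n} (hom : om ∈ Cf D)
    (hβom : 0 < ⟪β, om⟫) :
    halfFor D β k w0 = Hle β k := by
  unfold halfFor
  rw [if_neg]
  intro hcond
  have h1 : -om ∈ {v : V n | -v ∈ Cf D} := by simpa using hom
  rw [← hw0.2] at h1
  obtain ⟨v, hv, hveq⟩ := h1
  have := hcond v hv
  rw [hveq] at this
  rw [inner_neg_right] at this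
  linarith

lemma PhiJpos_subset_pos (D : RootData n) (J : Set (Fin n)) : PhiJpos D J ⊆ D.pos :=
  Set.inter_subset_left

lemma PhiJpos_univ (D : RootData n) : PhiJpos D Set.univ = D.pos := by
  unfold PhiJpos PhiJ
  ext α
  constructor
  · exact fun h => h.1
  · intro h
    refine ⟨h, D.pos_sub h, ?_⟩
    rw [Set.image_univ, span_simple_top D]
    exact Submodule.mem_top

lemma alcove_in_sector (D : RootData n) (J : Set (Fin n)) (w0 : Equiv.Perm (V n))
    (hw0 : IsLongest D w0) (nb : V n → ℤ) {u : V n} (hu : u ∉ wallUnion D)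
    {om : V n} (hom : om ∈ Cf D) (homp : ∀ β ∈ D.pos, 0 < ⟪β, om⟫)
    (hJin : ∀ α ∈ PhiJpos D J, 0 < ⟪α, u⟫ ∧ ⟪α, u⟫ < 1)
    (hB : ∀ β ∈ D.pos \ PhiJpos D J, ⟪β, u⟫ < (nb β : ℝ)) :
    closure (connectedComponentIn (wallUnion D)ᶜ u) ⊆ sectorJ D J w0 nb := by
  refine Set.subset_inter (Set.subset_iInter₂ fun α hα => ?_)
    (Set.subset_iInter₂ fun β hβ => ?_)
  · have hαpos : α ∈ D.pos := hα.1
    have hαΦ : α ∈ D.Φ := D.pos_sub hαpos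
    rw [halfFor_one D hαpos, halfFor_w0 D hw0 hαpos 1 hom (homp α hαpos)]
    refine Set.subset_inter ?_ ?_
    · have h0 : ((0 : ℤ) : ℝ) = (0 : ℝ) := by norm_num
      rw [← h0]
      exact closure_comp_ge D hu hαΦ (by rw [h0]; exact (hJin α hα).1)
    · have h1 : ((1 : ℤ) : ℝ) = (1 : ℝ) := by norm_num
      rw [← h1]
      exact closure_comp_le D hu hαΦ (by rw [h1]; exact (hJin α hα).2)
  · have hβpos : β ∈ D.pos := hβ.1
    have hβΦ : β ∈ D.Φ := D.pos_sub hβpos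
    rw [halfFor_w0 D hw0 hβpos (nb β : ℝ) hom (homp β hβpos)]
    exact closure_comp_le D hu hβΦ (hB β hβ)

lemma sector_main (D : RootData n) (J : Set (Fin n)) (w0 : Equiv.Perm (V n))
    (hw0 : IsLongest D w0) (nb : V n → ℤ) :
    (∃ c, IsAlcove D c ∧ c ⊆ sectorJ D J w0 nb) ∧
    (J ≠ Set.univ → ∃ A : ℕ → Set (V n),
      (∀ k, IsAlcove D (A k) ∧ A k ⊆ sectorJ D J w0 nb) ∧ Function.Injective A) := by
  obtain ⟨ω, hω⟩ := exists_dual D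
  set om : V n := ∑ j, ω j with homdef
  have homsum : ∀ β ∈ D.pos, ∃ c : Fin n → ℝ, (∀ i, 0 ≤ c i) ∧
      β = ∑ i, c i • D.simple i ∧ ∀ j, ⟪β, ω j⟫ = c j := by
    intro β hβ
    obtain ⟨c, hc0, hceq⟩ := D.pos_combo β hβ
    exact ⟨c, hc0, hceq, fun j => by rw [hceq]; exact inner_combo D hω c j⟩
  have hP1 : ∀ β ∈ D.pos, 0 < ⟪β, om⟫ := by
    intro β hβ
    obtain ⟨c, hc0, hceq, hcj⟩ := homsum β hβ
    have hsum : ⟪β, om⟫ = ∑ j, c j := by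
      rw [homdef, inner_sum]
      exact Finset.sum_congr rfl fun j _ => hcj j
    rw [hsum]
    rcases (Finset.sum_nonneg fun j _ => hc0 j).lt_or_eq with h | h
    · exact h
    · exfalso
      have hall := (Finset.sum_eq_zero_iff_of_nonneg fun j _ => hc0 j).mp h.symm
      refine D.nonzero β (D.pos_sub hβ) ?_
      rw [hceq]
      exact Finset.sum_eq_zero fun i _ => by
        rw [hall i (Finset.mem_univ i), zero_smul]
  have homCf : om ∈ Cf D := fun α hα => le_of_lt (hP1 α hα)
  obtain ⟨M, hM⟩ : ∃ M : ℝ, ∀ β ∈ D.pos, ⟪β, om⟫ ≤ M := by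
    have hfin : (D.pos).Finite := D.finite.subset D.pos_sub
    obtain ⟨M, hM⟩ := (hfin.image fun β => ⟪β, om⟫).bddAbove
    exact ⟨M, fun β hβ => hM (Set.mem_image_of_mem _ hβ)⟩
  have hmax : (0 : ℝ) < max M 1 + 1 := by
    have := le_max_right M 1; linarith
  set ε : ℝ := (max M 1 + 1)⁻¹ with hεdef
  have hεpos : 0 < ε := inv_pos.mpr hmax
  set x₀ : V n := ε • om with hx₀def
  have hx₀ : ∀ β ∈ D.pos, 0 < ⟪β, x₀⟫ ∧ ⟪β, x₀⟫ < 1 := by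
    intro β hβ
    have h1 : ⟪β, x₀⟫ = ε * ⟪β, om⟫ := by
      rw [hx₀def, real_inner_smul_right]
    constructor
    · rw [h1]; exact mul_pos hεpos (hP1 β hβ)
    · rw [h1, hεdef]
      have hle : ⟪β, om⟫ < max M 1 + 1 := by
        have := hM β hβ; have := le_max_left M 1; linarith
      rw [mul_comm, ← div_eq_mul_inv, div_lt_one hmax]
      exact hle
  have hx₀wall : ∀ α ∈ D.Φ, ∀ m : ℤ, ⟪α, x₀⟫ ≠ (m : ℝ) := by
    intro α hα m h
    rcases D.pos_total α hα with hp | hp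
    · obtain ⟨h1, h2⟩ := hx₀ α hp
      rw [h] at h1 h2
      have h3 : 0 < m := by exact_mod_cast h1
      have h4 : m < 1 := by exact_mod_cast h2
      omega
    · obtain ⟨h1, h2⟩ := hx₀ (-α) hp
      rw [inner_neg_left, h] at h1 h2
      have h3 : 0 < -(m : ℝ) := h1
      have h4 : (m : ℝ) < 0 := by linarith
      have h5 : m < 0 := by exact_mod_cast h4
      have h6 : -1 < m := by
        have : -(m : ℝ) < 1 := h2
        have : (-1 : ℝ) < m := by linarith
        exact_mod_cast this
      omega
  by_cases hJu : J = Set.univ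
  · have hu : x₀ ∉ wallUnion D := by
      intro hmem
      rw [mem_wallUnion_iff] at hmem
      obtain ⟨α, hα, m, hm⟩ := hmem
      exact hx₀wall α hα m hm
    have hsub : closure (connectedComponentIn (wallUnion D)ᶜ x₀) ⊆ sectorJ D J w0 nb := by
      refine alcove_in_sector D J w0 hw0 nb hu homCf hP1
        (fun α hα => hx₀ α (PhiJpos_subset_pos D J hα)) ?_
      intro β hβ
      rw [hJu, PhiJpos_univ] at hβ
      exact absurd hβ.1 hβ.2
    exact ⟨⟨_, ⟨x₀, hu, rfl⟩, hsub⟩, fun h => absurd hJu h⟩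
  · -- J ≠ univ : build the injective family
    obtain ⟨j₀, hj₀⟩ := (Set.ne_univ_iff_exists_notMem _).mp hJu
    set Jc : Finset (Fin n) := Finset.univ.filter (fun j => j ∉ J) with hJcdef
    set ν : V n := -(∑ j ∈ Jc, ω j) with hνdef
    have hνsimple : ∀ i, ⟪D.simple i, ν⟫ = if i ∈ Jc then (-1 : ℝ) else 0 := by
      intro i
      rw [hνdef, inner_neg_right, inner_sum]
      have : ∀ j ∈ Jc, ⟪D.simple i, ω j⟫ = if i = j then (1 : ℝ) else 0 :=
        fun j _ => hω i j
      rw [Finset.sum_congr rfl this, Finset.sum_ite_eq]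
      split <;> norm_num
    have hνJ : ∀ α ∈ PhiJpos D J, ⟪α, ν⟫ = 0 := by
      intro α hα
      have hspan : α ∈ Submodule.span ℝ (D.simple '' J) := hα.2.2
      have hker : Submodule.span ℝ (D.simple '' J) ≤
          LinearMap.ker ((innerSL ℝ ν).toLinearMap) := by
        refine Submodule.span_le.mpr ?_
        rintro w ⟨i, hiJ, rfl⟩
        simp only [Set.mem_setOf_eq, SetLike.mem_coe, LinearMap.mem_ker,
          ContinuousLinearMap.coe_coe, innerSL_apply_apply]
        rw [real_inner_comm, hνsimple i, if_neg]
        simp only [hJcdef, Finset.mem_filter, Finset.mem_univ, true_and]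
        exact fun h => h hiJ
      have := hker hspan
      simp only [LinearMap.mem_ker, ContinuousLinearMap.coe_coe, innerSL_apply_apply] at this
      rw [real_inner_comm]
      exact this
    have hcoef : ∀ β ∈ D.pos \ PhiJpos D J, ⟪β, ν⟫ < 0 := by
      intro β hβ
      obtain ⟨c, hc0, hceq, hcj⟩ := homsum β hβ.1
      have hval : ⟪β, ν⟫ = -∑ j ∈ Jc, c j := by
        rw [hνdef, inner_neg_right, inner_sum]
        congr 1
        exact Finset.sum_congr rfl fun j _ => hcj j
      rw [hval, neg_lt, neg_zero]
      rcases (Finset.sum_nonneg fun j (_ : j ∈ Jc) => hc0 j).lt_or_eq with h | h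
      · exact h
      · exfalso
        have hall := (Finset.sum_eq_zero_iff_of_nonneg fun j _ => hc0 j).mp h.symm
        have hsplit := Finset.sum_filter_add_sum_filter_not Finset.univ
          (fun i => i ∈ J) (fun i => c i • D.simple i)
        have hz : ∑ i ∈ Finset.univ.filter (fun i => ¬ i ∈ J), c i • D.simple i = 0 :=
          Finset.sum_eq_zero fun i hi => by
            rw [hall i (by simpa [hJcdef] using hi), zero_smul]
        have hmem : β ∈ Submodule.span ℝ (D.simple '' J) := by
          rw [hceq, ← hsplit, hz, add_zero]
          refine Submodule.sum_mem _ fun i hi => ?_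
          have hiJ : i ∈ J := (Finset.mem_filter.mp hi).2
          exact Submodule.smul_mem _ _ (Submodule.subset_span ⟨i, hiJ, rfl⟩)
        exact hβ.2 ⟨hβ.1, D.pos_sub hβ.1, hmem⟩
    set β₀ : V n := D.simple j₀ with hβ₀def
    have hβ₀B : β₀ ∈ D.pos \ PhiJpos D J := by
      refine ⟨D.simple_mem j₀, fun hmem => ?_⟩
      exact (D.simple_indep.notMem_span_image hj₀) hmem.2.2
    have hβ₀Φ : β₀ ∈ D.Φ := D.pos_sub (D.simple_mem j₀)
    set d : ℝ := -⟪β₀, ν⟫ with hddef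
    have hd : 0 < d := by
      rw [hddef]
      linarith [hcoef β₀ hβ₀B]
    obtain ⟨S₀, hS₀⟩ : ∃ S₀ : ℝ, ∀ β ∈ D.pos \ PhiJpos D J,
        (⟪β, x₀⟫ - nb β) / (-⟪β, ν⟫) ≤ S₀ := by
      have hfin : (D.pos \ PhiJpos D J).Finite :=
        (D.finite.subset D.pos_sub).subset Set.diff_subset
      obtain ⟨S₀, hS₀⟩ := (hfin.image fun β => (⟪β, x₀⟫ - nb β) / (-⟪β, ν⟫)).bddAbove
      exact ⟨S₀, fun β hβ => hS₀ (Set.mem_image_of_mem _ hβ)⟩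
    have hthresh : ∀ β ∈ D.pos \ PhiJpos D J, ∀ s : ℝ, S₀ + 1 ≤ s →
        ⟪β, x₀⟫ + s * ⟪β, ν⟫ < (nb β : ℝ) := by
      intro β hβ s hs
      have hneg : ⟪β, ν⟫ < 0 := hcoef β hβ
      have h2 : (⟪β, x₀⟫ - nb β) / (-⟪β, ν⟫) < s := by linarith [hS₀ β hβ]
      rw [div_lt_iff₀ (by linarith : (0:ℝ) < -⟪β, ν⟫)] at h2
      nlinarith
    set C : ℝ := ⟪β₀, x₀⟫ with hCdef
    set N₀ : ℤ := ⌊C - 1 - d * (S₀ + 1)⌋ with hN₀def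
    have hN₀ : (N₀ : ℝ) ≤ C - 1 - d * (S₀ + 1) := Int.floor_le _
    have hchoice : ∀ k : ℕ, ∃ s,
        s ∈ Set.Ioo ((C - ((N₀ : ℝ) - k) - 1)/d) ((C - ((N₀ : ℝ) - k))/d) ∧
        ∀ α ∈ D.Φ, ∀ m : ℤ, ⟪α, x₀ + s • ν⟫ ≠ (m : ℝ) := by
      intro k
      have hlt : (C - ((N₀ : ℝ) - k) - 1)/d < (C - ((N₀ : ℝ) - k))/d :=
        (div_lt_div_iff_of_pos_right hd).mpr (by linarith)
      obtain ⟨s, hs1, hs2⟩ := exists_good_s D x₀ ν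
        (fun α hα _ => hx₀wall α hα) hlt
      refine ⟨s, hs1, fun α hα m h => hs2 α hα m ?_⟩
      rw [inner_add_right, real_inner_smul_right α ν s] at h
      exact h
    choose sk hsk1 hsk2 using hchoice
    set u : ℕ → V n := fun k => x₀ + sk k • ν with hudef
    have huval : ∀ (k : ℕ) (γ : V n), ⟪γ, u k⟫ = ⟪γ, x₀⟫ + sk k * ⟪γ, ν⟫ := by
      intro k γ
      rw [hudef]
      simp only
      rw [inner_add_right, real_inner_smul_right γ ν (sk k)]
    have huwall : ∀ k, u k ∉ wallUnion D := by
      intro k h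
      rw [mem_wallUnion_iff] at h
      obtain ⟨α, hα, m, hm⟩ := h
      exact hsk2 k α hα m hm
    have hskge : ∀ k, S₀ + 1 ≤ sk k := by
      intro k
      have h1 := (hsk1 k).1
      have hk0 : (0 : ℝ) ≤ (k : ℝ) := Nat.cast_nonneg k
      have hlb : S₀ + 1 ≤ (C - ((N₀ : ℝ) - k) - 1)/d := by
        rw [le_div_iff₀ hd]
        nlinarith
      linarith
    have hβ₀val : ∀ k, ((N₀ : ℝ) - k) < ⟪β₀, u k⟫ ∧ ⟪β₀, u k⟫ < (N₀ : ℝ) - k + 1 := by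
      intro k
      have h1 := (hsk1 k).1
      have h2 := (hsk1 k).2
      have hb : ⟪β₀, ν⟫ = -d := by rw [hddef]; ring
      rw [huval, hb, ← hCdef]
      have h2' : sk k * d < C - ((N₀ : ℝ) - k) := (lt_div_iff₀ hd).mp h2
      have h1' : C - ((N₀ : ℝ) - k) - 1 < sk k * d := (div_lt_iff₀ hd).mp h1
      refine ⟨by nlinarith, by nlinarith⟩
    set A : ℕ → Set (V n) :=
      fun k => closure (connectedComponentIn (wallUnion D)ᶜ (u k)) with hAdef
    have hmain : ∀ k, IsAlcove D (A k) ∧ A k ⊆ sectorJ D J w0 nb := by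
      intro k
      refine ⟨⟨u k, huwall k, rfl⟩, ?_⟩
      refine alcove_in_sector D J w0 hw0 nb (huwall k) homCf hP1 ?_ ?_
      · intro α hα
        rw [huval, hνJ α hα, mul_zero, add_zero]
        exact hx₀ α (PhiJpos_subset_pos D J hα)
      · intro β hβ
        rw [huval]
        exact hthresh β hβ (sk k) (hskge k)
    have hkey : ∀ a b : ℕ, a < b → A a ≠ A b := by
      intro a b hab hEq
      have hu_in : u a ∈ A a :=
        subset_closure (mem_connectedComponentIn (huwall a))
      have hval_b : ⟪β₀, u b⟫ < ((N₀ - b + 1 : ℤ) : ℝ) := by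
        push_cast
        linarith [(hβ₀val b).2]
      have hsub : A b ⊆ Hle β₀ ((N₀ - b + 1 : ℤ) : ℝ) :=
        closure_comp_le D (huwall b) hβ₀Φ hval_b
      have hle : ⟪β₀, u a⟫ ≤ ((N₀ - b + 1 : ℤ) : ℝ) := hsub (hEq ▸ hu_in)
      have hgt := (hβ₀val a).1
      have hab' : (a : ℝ) + 1 ≤ (b : ℝ) := by exact_mod_cast hab
      push_cast at hle
      linarith
    have hAinj : Function.Injective A := by
      intro k k' hkk'
      rcases Nat.lt_trichotomy k k' with h | h | h
      · exact absurd hkk' (hkey k k' h)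
      · exact h
      · exact absurd hkk'.symm (hkey k' k h)
    exact ⟨⟨A 0, (hmain 0).1, (hmain 0).2⟩, fun _ => ⟨A, hmain, hAinj⟩⟩

lemma exists_om (D : RootData n) : ∃ om : V n, om ∈ Cf D ∧ ∀ β ∈ D.pos, 0 < ⟪β, om⟫ := by
  obtain ⟨ω, hω⟩ := exists_dual D
  have hpos : ∀ β ∈ D.pos, 0 < ⟪β, ∑ j, ω j⟫ := by
    intro β hβ
    obtain ⟨c, hc0, hceq⟩ := D.pos_combo β hβ
    have hsum : ⟪β, ∑ j, ω j⟫ = ∑ j, c j := by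
      rw [inner_sum]
      refine Finset.sum_congr rfl fun j _ => ?_
      rw [hceq]
      exact inner_combo D hω c j
    rw [hsum]
    rcases (Finset.sum_nonneg fun j _ => hc0 j).lt_or_eq with h | h
    · exact h
    · exfalso
      have hall := (Finset.sum_eq_zero_iff_of_nonneg fun j _ => hc0 j).mp h.symm
      refine D.nonzero β (D.pos_sub hβ) ?_
      rw [hceq]
      exact Finset.sum_eq_zero fun i _ => by
        rw [hall i (Finset.mem_univ i), zero_smul]
  exact ⟨_, fun α hα => le_of_lt (hpos α hα), hpos⟩

lemma sector_unique (D : RootData n) (w0 : Equiv.Perm (V n)) (hw0 : IsLongest D w0)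
    (nb : V n → ℤ) {c c' : Set (V n)} (hc : IsAlcove D c) (hc' : IsAlcove D c')
    (hs : c ⊆ sectorJ D Set.univ w0 nb) (hs' : c' ⊆ sectorJ D Set.univ w0 nb) :
    c = c' := by
  obtain ⟨om, homCf, hP1⟩ := exists_om D
  set Ω : Set (V n) := {w | ∀ α ∈ D.pos, 0 < ⟪α, w⟫ ∧ ⟪α, w⟫ < 1} with hΩdef
  suffices key : ∀ e : Set (V n), IsAlcove D e → e ⊆ sectorJ D Set.univ w0 nb →
      e = closure Ω by
    rw [key c hc hs, key c' hc' hs']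
  intro e he hsub
  obtain ⟨v, hv, rfl⟩ := he
  have hvmem : v ∈ connectedComponentIn (wallUnion D)ᶜ v := mem_connectedComponentIn hv
  have hvsec : v ∈ sectorJ D Set.univ w0 nb := hsub (subset_closure hvmem)
  have hvval : ∀ α ∈ D.pos, 0 < ⟪α, v⟫ ∧ ⟪α, v⟫ < 1 := by
    intro α hα
    have hαΦ : α ∈ D.Φ := D.pos_sub hα
    have hmem := Set.mem_iInter₂.mp hvsec.1 α (by rw [PhiJpos_univ]; exact hα)
    rw [halfFor_one D hα 0, halfFor_w0 D hw0 hα 1 homCf (hP1 α hα)] at hmem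
    have hne0 : ⟪α, v⟫ ≠ 0 := by
      intro h
      exact hv (Hy_subset_wall D hαΦ 0 (by push_cast; exact h))
    have hne1 : ⟪α, v⟫ ≠ 1 := by
      intro h
      exact hv (Hy_subset_wall D hαΦ 1 (by push_cast; exact h))
    exact ⟨lt_of_le_of_ne hmem.1 (Ne.symm hne0), lt_of_le_of_ne hmem.2 hne1⟩
  have hΩopen : IsOpen Ω := by
    have hfin : D.pos.Finite := D.finite.subset D.pos_sub
    have hΩeq : Ω = ⋂ α ∈ D.pos, ({w : V n | 0 < ⟪α, w⟫} ∩ {w : V n | ⟪α, w⟫ < 1}) := by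
      ext w
      simp only [hΩdef, Set.mem_setOf_eq, Set.mem_iInter, Set.mem_inter_iff]
    rw [hΩeq]
    exact hfin.isOpen_biInter fun α _ =>
      (isOpen_lt continuous_const (inner_cont α)).inter
        (isOpen_lt (inner_cont α) continuous_const)
  have hΩconv : Convex ℝ Ω := by
    intro x hx y hy a b ha hb hab
    intro α hα
    obtain ⟨hx1, hx2⟩ := hx α hα
    obtain ⟨hy1, hy2⟩ := hy α hα
    have hval : ⟪α, a • x + b • y⟫ = a * ⟪α, x⟫ + b * ⟪α, y⟫ := by
      rw [inner_add_right, real_inner_smul_right α x a, real_inner_smul_right α y b]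
    constructor
    · rw [hval]
      rcases lt_or_eq_of_le ha with ha' | ha'
      · nlinarith [mul_pos ha' hx1, mul_nonneg hb hy1.le]
      · have hb1 : b = 1 := by linarith
        rw [← ha', hb1]
        simpa using hy1
    · rw [hval]
      rcases lt_or_eq_of_le ha with ha' | ha'
      · nlinarith [mul_lt_mul_of_pos_left hx2 ha', mul_le_mul_of_nonneg_left hy2.le hb]
      · have hb1 : b = 1 := by linarith
        rw [← ha', hb1]
        simpa using hy2
  have hΩsub : Ω ⊆ (wallUnion D)ᶜ := by
    intro w hw hmem
    rw [mem_wallUnion_iff] at hmem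
    obtain ⟨α, hα, m, hm⟩ := hmem
    rcases D.pos_total α hα with hp | hp
    · obtain ⟨h1, h2⟩ := hw α hp
      rw [hm] at h1 h2
      have h3 : 0 < m := by exact_mod_cast h1
      have h4 : m < 1 := by exact_mod_cast h2
      omega
    · obtain ⟨h1, h2⟩ := hw (-α) hp
      rw [inner_neg_left, hm] at h1 h2
      have h3 : (m : ℝ) < 0 := by linarith
      have h4 : (-1 : ℝ) < (m : ℝ) := by linarith
      have h5 : m < 0 := by exact_mod_cast h3
      have h6 : -1 < m := by exact_mod_cast h4
      omega
  have hvΩ : v ∈ Ω := hvval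
  have hΩcomp : Ω ⊆ connectedComponentIn (wallUnion D)ᶜ v :=
    hΩconv.isPreconnected.subset_connectedComponentIn hvΩ hΩsub
  have hcompΩ : connectedComponentIn (wallUnion D)ᶜ v ⊆ Ω := by
    intro w hw α hα
    have hαΦ : α ∈ D.Φ := D.pos_sub hα
    constructor
    · have h0 : ((0 : ℤ) : ℝ) < ⟪α, v⟫ := by push_cast; exact (hvval α hα).1
      have := (comp_side D hv hαΦ 0).2 h0 hw
      simpa using this
    · have h1 : ⟪α, v⟫ < ((1 : ℤ) : ℝ) := by push_cast; exact (hvval α hα).2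
      have := (comp_side D hv hαΦ 1).1 h1 hw
      simpa using this
  rw [le_antisymm hcompΩ hΩcomp]

end AuxProof

/-- Lemma: every `(J,y)`-sector contains at least one alcove, and if it
contains more than one then it contains infinitely many. -/
theorem sector_alcoves {n : ℕ} (D : RootData n)
    (J : Set (Fin n)) (y : AffW D) (w0 : Equiv.Perm (V n)) (hw0 : IsLongest D w0)
    (nb : V n → ℤ) :
    (∃ c, IsAlcove D c ∧ c ⊆ sectorJY D J w0 y nb) ∧
    ((∃ c c', IsAlcove D c ∧ IsAlcove D c' ∧ c ⊆ sectorJY D J w0 y nb ∧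
        c' ⊆ sectorJY D J w0 y nb ∧ c ≠ c') →
      {c : Set (V n) | IsAlcove D c ∧ c ⊆ sectorJY D J w0 y nb}.Infinite) := by
  obtain ⟨⟨c0, hc0a, hc0s⟩, hinf⟩ := sector_main D J w0 hw0 nb
  have hymem : (y : Equiv.Perm (V n)) ∈ AffW D := y.2
  constructor
  · exact ⟨actW y c0, alcove_image D hymem hc0a, Set.image_mono hc0s⟩
  · rintro ⟨c, c', hca, hc'a, hcs, hc's, hne⟩
    by_cases hJu : J = Set.univ
    · exfalso
      apply hne
      subst hJu
      set g : Equiv.Perm (V n) := (y : Equiv.Perm (V n)) with hgdef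
      have hinvmem : g⁻¹ ∈ AffW D := by
        rw [hgdef]
        exact inv_mem hymem
      have hback : ∀ S : Set (V n), ⇑g⁻¹ '' (⇑g '' S) = S := by
        intro S
        rw [show ⇑g⁻¹ = ⇑g.symm from rfl]
        exact Equiv.symm_image_image g S
      have hds : ⇑g⁻¹ '' c ⊆ sectorJ D Set.univ w0 nb := by
        have h1 : ⇑g⁻¹ '' c ⊆ ⇑g⁻¹ '' (⇑g '' (sectorJ D Set.univ w0 nb)) :=
          Set.image_mono hcs
        rwa [hback] at h1
      have hds' : ⇑g⁻¹ '' c' ⊆ sectorJ D Set.univ w0 nb := by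
        have h1 : ⇑g⁻¹ '' c' ⊆ ⇑g⁻¹ '' (⇑g '' (sectorJ D Set.univ w0 nb)) :=
          Set.image_mono hc's
        rwa [hback] at h1
      have heq := sector_unique D w0 hw0 nb (alcove_image D hinvmem hca)
        (alcove_image D hinvmem hc'a) hds hds'
      have himg := congrArg (fun S => ⇑g '' S) heq
      have hfwd : ∀ S : Set (V n), ⇑g '' (⇑g⁻¹ '' S) = S := by
        intro S
        rw [show ⇑g⁻¹ = ⇑g.symm from rfl]
        exact Equiv.image_symm_image g S
      rwa [hfwd c, hfwd c'] at himg
    · obtain ⟨A, hA, hAinj⟩ := hinf hJu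
      refine Set.infinite_of_injective_forall_mem
        (f := fun k : ℕ => actW y (A k)) ?_ ?_
      · intro k k' h
        exact hAinj (Set.image_injective.mpr (Equiv.injective _) h)
      · intro k
        exact ⟨alcove_image D hymem (hA k).1, Set.image_mono (hA k).2⟩
end
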